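/- For every n ≥ 1, the type C Chan-Robbins-Yuen polytope CRYC_{n+1} = F_{K^C_{n+1}}(2,0,…,0) has exactly 3^n vertices. -/

import Mathlib

/-- Edges of the complete signed graph `K^C_{n+1}`: either a pair `i < j` together with
a sign (`true` = positive, `false` = negative), or a loop `(i,i,+)` at a vertex `i`. -/
abbrev EdgeC (n : ℕ) := ({p : Fin (n + 1) × Fin (n + 1) // p.1 < p.2} × Bool) ⊕ Fin (n + 1)

/-- The type `C` root associated to an edge: `e_i - e_j` for a negative edge,
`e_i + e_j` for a positive edge, and `2e_i` for a loop at `i`. -/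
def rootC (n : ℕ) (e : EdgeC n) : Fin (n + 1) → ℝ :=
  match e with
  | Sum.inl e => fun k =>
      (if k = e.1.1.1 then 1 else 0) + (if k = e.1.1.2 then (if e.2 then 1 else -1) else 0)
  | Sum.inr i => fun k => if k = i then 2 else 0

/-- The type `C` Chan-Robbins-Yuen polytope `CRYC_{n+1} = F_{K^C_{n+1}}(2,0,…,0)`. -/
def CRYC (n : ℕ) : Set (EdgeC n → ℝ) :=
  {b | (∀ e, 0 ≤ b e) ∧
    (∑ e, b e • rootC n e) = fun k => if k = 0 then (2 : ℝ) else 0}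

namespace CRYCproof
variable {n : ℕ}

/-- negative edge -/
def neg (i j : Fin (n+1)) (h : i < j) : EdgeC n := Sum.inl ⟨⟨(i, j), h⟩, false⟩
/-- positive edge -/
def pose (i j : Fin (n+1)) (h : i < j) : EdgeC n := Sum.inl ⟨⟨(i, j), h⟩, true⟩
/-- loop -/
def loope (i : Fin (n+1)) : EdgeC n := Sum.inr i

@[simp] lemma root_neg (i j : Fin (n+1)) (h : i < j) (k) :
    rootC n (neg i j h) k = (if k = i then 1 else 0) - (if k = j then 1 else 0) := by
  simp only [rootC, neg]
  split_ifs <;> first | contradiction | ring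

@[simp] lemma root_pose (i j : Fin (n+1)) (h : i < j) (k) :
    rootC n (pose i j h) k = (if k = i then 1 else 0) + (if k = j then 1 else 0) := by
  simp only [rootC, pose]
  split
  next => rfl
  next => rfl

@[simp] lemma root_loope (i : Fin (n+1)) (k) :
    rootC n (loope i) k = if k = i then 2 else 0 := rfl

lemma neg_injective {i j i' j' : Fin (n+1)} {h h'} (e : (neg i j h : EdgeC n) = neg i' j' h') :
    i = i' ∧ j = j' := by
  simp only [neg, Sum.inl.injEq, Prod.mk.injEq, Subtype.mk.injEq] at e
  exact ⟨e.1.1, e.1.2⟩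

lemma neg_ne_pose {i j i' j' : Fin (n+1)} {h h'} : (neg i j h : EdgeC n) ≠ pose i' j' h' := by
  simp [neg, pose]

lemma neg_ne_loope {i j u : Fin (n+1)} {h} : (neg i j h : EdgeC n) ≠ loope u := by
  simp [neg, loope]

/-- the maximum of a finset (0 if empty) -/
noncomputable def topV (A : Finset (Fin (n+1))) : Fin (n+1) := A.sup id

lemma le_topV {A : Finset (Fin (n+1))} {u} (h : u ∈ A) : u ≤ topV A := Finset.le_sup (f := id) h

lemma topV_mem {A : Finset (Fin (n+1))} (h : A.Nonempty) : topV A ∈ A := by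
  obtain ⟨b, hb, he⟩ := Finset.exists_mem_eq_sup A h id
  rw [topV, he]; exact hb

/-- i and j are consecutive elements of A -/
def consec (A : Finset (Fin (n+1))) (i j : Fin (n+1)) : Prop :=
  i ∈ A ∧ j ∈ A ∧ i < j ∧ ∀ k ∈ A, k ≤ i ∨ j ≤ k

instance (A : Finset (Fin (n+1))) (i j : Fin (n+1)) : Decidable (consec A i j) := by
  unfold consec; infer_instance

lemma consec.lt {A : Finset (Fin (n+1))} {i j} (h : consec A i j) : i < j := h.2.2.1
lemma consec.mem_left {A : Finset (Fin (n+1))} {i j} (h : consec A i j) : i ∈ A := h.1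
lemma consec.mem_right {A : Finset (Fin (n+1))} {i j} (h : consec A i j) : j ∈ A := h.2.1

lemma consec_succ_unique {A : Finset (Fin (n+1))} {i j j'} (h : consec A i j)
    (h' : consec A i j') : j = j' := by
  have h1 : j ≤ j' := (h.2.2.2 j' h'.2.1).resolve_left (not_le.2 h'.2.2.1)
  have h2 : j' ≤ j := (h'.2.2.2 j h.2.1).resolve_left (not_le.2 h.2.2.1)
  exact le_antisymm h1 h2

lemma consec_pred_unique {A : Finset (Fin (n+1))} {i i' j} (h : consec A i j)
    (h' : consec A i' j) : i = i' := by
  have h1 : i' ≤ i := (h.2.2.2 i' h'.1).resolve_right (not_le.2 h'.2.2.1)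
  have h2 : i ≤ i' := (h'.2.2.2 i h.1).resolve_right (not_le.2 h.2.2.1)
  exact le_antisymm h2 h1

lemma exists_succ {A : Finset (Fin (n+1))} {i} (hi : i ∈ A) (hne : i ≠ topV A) :
    ∃ j, consec A i j := by
  have hlt : i < topV A := lt_of_le_of_ne (le_topV hi) hne
  have hne2 : (A.filter (fun k => i < k)).Nonempty :=
    ⟨topV A, Finset.mem_filter.2 ⟨topV_mem ⟨i, hi⟩, hlt⟩⟩
  refine ⟨(A.filter (fun k => i < k)).min' hne2, ?_⟩
  have hmem := (A.filter (fun k => i < k)).min'_mem hne2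
  rw [Finset.mem_filter] at hmem
  refine ⟨hi, hmem.1, hmem.2, fun k hk => ?_⟩
  by_cases hik : i < k
  · have hmem2 : k ∈ A.filter (fun x => i < x) := Finset.mem_filter.2 ⟨hk, hik⟩
    exact Or.inr (Finset.min'_le _ k hmem2)
  · exact Or.inl (not_lt.1 hik)

lemma exists_pred {A : Finset (Fin (n+1))} {u} (hu : u ∈ A) (h0 : 0 ∈ A) (hne : u ≠ 0) :
    ∃ t, consec A t u := by
  have h0u : (0 : Fin (n+1)) < u := lt_of_le_of_ne (Fin.zero_le u) (Ne.symm hne)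
  have hne2 : (A.filter (fun k => k < u)).Nonempty := ⟨0, Finset.mem_filter.2 ⟨h0, h0u⟩⟩
  refine ⟨(A.filter (fun k => k < u)).max' hne2, ?_⟩
  have hmem := (A.filter (fun k => k < u)).max'_mem hne2
  rw [Finset.mem_filter] at hmem
  refine ⟨hmem.1, hu, hmem.2, fun k hk => ?_⟩
  by_cases hik : k < u
  · have hmem2 : k ∈ A.filter (fun x => x < u) := Finset.mem_filter.2 ⟨hk, hik⟩
    exact Or.inl (Finset.le_max' _ k hmem2)
  · exact Or.inr (not_lt.1 hik)

lemma consec_le_pred {A : Finset (Fin (n+1))} {t u m} (h : consec A t u) (hm : m ∈ A)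
    (hmu : m < u) : m ≤ t := by
  rcases h.2.2.2 m hm with hc | hc
  · exact hc
  · exact absurd hmu (not_lt.2 hc)

lemma consec_insert_top {A : Finset (Fin (n+1))} {u : Fin (n+1)} (hA : A.Nonempty)
    (hu : topV A < u) {i j : Fin (n+1)} :
    consec (insert u A) i j ↔ consec A i j ∨ (i = topV A ∧ j = u) := by
  constructor
  · rintro ⟨hi, hj, hij, hbet⟩
    rcases Finset.mem_insert.1 hj with rfl | hjA
    · right
      have hiA : i ∈ A := by
        rcases Finset.mem_insert.1 hi with rfl | h
        · exact absurd hij (lt_irrefl _)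
        · exact h
      refine ⟨?_, rfl⟩
      by_contra hne
      have hlt : i < topV A := lt_of_le_of_ne (le_topV hiA) hne
      rcases hbet (topV A) (Finset.mem_insert_of_mem (topV_mem hA)) with hc | hc
      · exact absurd hlt (not_lt.2 hc)
      · exact absurd hu (not_lt.2 hc)
    · left
      have hiA : i ∈ A := by
        rcases Finset.mem_insert.1 hi with rfl | h
        · exact absurd (lt_of_lt_of_le hij (le_topV hjA)) (not_lt.2 (le_of_lt hu))
        · exact h
      exact ⟨hiA, hjA, hij, fun k hk => hbet k (Finset.mem_insert_of_mem hk)⟩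
  · rintro (⟨hi, hj, hij, hbet⟩ | ⟨rfl, rfl⟩)
    · refine ⟨Finset.mem_insert_of_mem hi, Finset.mem_insert_of_mem hj, hij, fun k hk => ?_⟩
      rcases Finset.mem_insert.1 hk with rfl | hkA
      · exact Or.inr (le_of_lt (lt_of_le_of_lt (le_topV hj) hu))
      · exact hbet k hkA
    · refine ⟨Finset.mem_insert_of_mem (topV_mem hA), Finset.mem_insert_self _ _, hu,
        fun k hk => ?_⟩
      rcases Finset.mem_insert.1 hk with rfl | hkA
      · exact Or.inr le_rfl
      · exact Or.inl (le_topV hkA)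

lemma consec_singleton (i j u : Fin (n+1)) : ¬ consec {u} i j := by
  rintro ⟨hi, hj, hij, -⟩
  rw [Finset.mem_singleton] at hi hj
  subst hi hj
  exact lt_irrefl _ hij

-- continuation fragment; will be concatenated after s1 content (without its last `end`)

/-- unit flow along the chain of consecutive elements of `A` -/
def pathFlow (A : Finset (Fin (n+1))) : EdgeC n → ℝ := fun e =>
  match e with
  | Sum.inl pe => if pe.2 = false ∧ consec A pe.1.1.1 pe.1.1.2 then 1 else 0
  | Sum.inr _ => 0

@[simp] lemma pathFlow_neg (A : Finset (Fin (n+1))) (i j : Fin (n+1)) (h : i < j) :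
    pathFlow A (neg i j h) = if consec A i j then 1 else 0 := by
  simp [pathFlow, neg]

@[simp] lemma pathFlow_pose (A : Finset (Fin (n+1))) (i j : Fin (n+1)) (h : i < j) :
    pathFlow A (pose i j h) = 0 := by
  simp [pathFlow, pose]

@[simp] lemma pathFlow_loope (A : Finset (Fin (n+1))) (i : Fin (n+1)) :
    pathFlow A (loope i) = 0 := rfl

lemma pathFlow_nonneg (A : Finset (Fin (n+1))) (e : EdgeC n) : 0 ≤ pathFlow A e := by
  unfold pathFlow
  rcases e with pe | i
  · dsimp only; split_ifs <;> norm_num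
  · exact le_refl 0

lemma pathFlow_ne_zero {A : Finset (Fin (n+1))} {e : EdgeC n} (h : pathFlow A e ≠ 0) :
    ∃ i j, ∃ hij : i < j, e = neg i j hij ∧ consec A i j := by
  rcases e with ⟨⟨⟨i, j⟩, hij⟩, b⟩ | i
  · have hc : b = false ∧ consec A i j := by
      by_contra hcc
      exact h (by unfold pathFlow; dsimp only; rw [if_neg hcc])
    rcases hc with ⟨rfl, hc2⟩
    exact ⟨i, j, hij, rfl, hc2⟩
  · exact absurd rfl h

/-- the source edge attached to the pair of chains `A`, `B` -/
noncomputable def srcE (A B : Finset (Fin (n+1))) : EdgeC n :=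
  if h : topV A = topV B then loope (topV A)
  else pose (min (topV A) (topV B)) (max (topV A) (topV B)) (min_lt_max.2 h)

noncomputable def srcFlow (A B : Finset (Fin (n+1))) : EdgeC n → ℝ :=
  fun e => if e = srcE A B then 1 else 0

lemma srcFlow_nonneg (A B : Finset (Fin (n+1))) (e : EdgeC n) : 0 ≤ srcFlow A B e := by
  unfold srcFlow; split_ifs <;> norm_num

lemma srcE_comm (A B : Finset (Fin (n+1))) : srcE A B = srcE B A := by
  unfold srcE
  by_cases h : topV A = topV B
  · rw [dif_pos h, dif_pos h.symm, h]
  · rw [dif_neg h, dif_neg (Ne.symm h)]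
    congr 1 <;> [exact min_comm _ _; exact max_comm _ _]

lemma srcFlow_comm (A B : Finset (Fin (n+1))) : srcFlow A B = srcFlow B A := by
  unfold srcFlow; rw [srcE_comm]

lemma root_srcE (A B : Finset (Fin (n+1))) (k : Fin (n+1)) :
    rootC n (srcE A B) k = (if k = topV A then 1 else 0) + (if k = topV B then 1 else 0) := by
  unfold srcE
  by_cases h : topV A = topV B
  · rw [dif_pos h, root_loope, ← h]
    split_ifs <;> norm_num
  · rw [dif_neg h, root_pose]
    rcases lt_or_gt_of_ne h with hlt | hlt
    · rw [min_eq_left hlt.le, max_eq_right hlt.le]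
    · rw [min_eq_right hlt.le, max_eq_left hlt.le, add_comm]

/-- the candidate vertex flow attached to the pair of chains `A`, `B` -/
noncomputable def vflow (A B : Finset (Fin (n+1))) : EdgeC n → ℝ :=
  fun e => pathFlow A e + pathFlow B e + srcFlow A B e

lemma vflow_comm (A B : Finset (Fin (n+1))) : vflow A B = vflow B A := by
  funext e; unfold vflow; rw [srcFlow_comm]; ring

lemma vflow_nonneg (A B : Finset (Fin (n+1))) (e : EdgeC n) : 0 ≤ vflow A B e :=
  add_nonneg (add_nonneg (pathFlow_nonneg _ _) (pathFlow_nonneg _ _)) (srcFlow_nonneg _ _ _)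

lemma mem_CRYC_iff {x : EdgeC n → ℝ} :
    x ∈ CRYC n ↔ ((∀ e, 0 ≤ x e) ∧
      ∀ k, ∑ e, x e * rootC n e k = if k = 0 then 2 else 0) := by
  unfold CRYC
  simp only [Set.mem_setOf_eq]
  constructor
  · rintro ⟨h1, h2⟩
    refine ⟨h1, fun k => ?_⟩
    have := congrFun h2 k
    simpa [Finset.sum_apply, smul_eq_mul] using this
  · rintro ⟨h1, h2⟩
    refine ⟨h1, funext fun k => ?_⟩
    simpa [Finset.sum_apply, smul_eq_mul] using h2 k

lemma ite_mul_ite_sub (P Q R : Prop) [Decidable P] [Decidable Q] [Decidable R] :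
    (if P then (1:ℝ) else 0) * ((if Q then (1:ℝ) else 0) - (if R then (1:ℝ) else 0)) =
      (if P ∧ Q then (1:ℝ) else 0) - (if P ∧ R then (1:ℝ) else 0) := by
  split_ifs <;> simp_all <;> ring

lemma sum_consec_left (A : Finset (Fin (n+1))) (k : Fin (n+1)) :
    ∑ p : {p : Fin (n+1) × Fin (n+1) // p.1 < p.2},
      (if consec A p.1.1 p.1.2 ∧ k = p.1.1 then (1:ℝ) else 0) =
      if k ∈ A ∧ k ≠ topV A then 1 else 0 := by
  by_cases hk : k ∈ A ∧ k ≠ topV A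
  · obtain ⟨j, hj⟩ := exists_succ hk.1 hk.2
    rw [if_pos hk]
    refine Finset.sum_eq_single_of_mem (⟨(k, j), hj.lt⟩ :
        {p : Fin (n+1) × Fin (n+1) // p.1 < p.2}) (Finset.mem_univ _) ?_ |>.trans
      (if_pos ⟨hj, rfl⟩)
    rintro ⟨⟨i', j'⟩, hij'⟩ - hne
    rw [if_neg]
    rintro ⟨hc, rfl⟩
    exact hne (Subtype.ext (Prod.ext rfl (consec_succ_unique hc hj)))
  · rw [if_neg hk]
    refine Finset.sum_eq_zero ?_
    rintro ⟨⟨i', j'⟩, hij'⟩ -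
    rw [if_neg]
    rintro ⟨hc, rfl⟩
    exact hk ⟨hc.1, fun htop => absurd (lt_of_lt_of_le hc.2.2.1 (le_topV hc.2.1))
      (by rw [← htop] at *; exact not_lt.2 le_rfl)⟩

lemma sum_consec_right (A : Finset (Fin (n+1))) (h0 : 0 ∈ A) (k : Fin (n+1)) :
    ∑ p : {p : Fin (n+1) × Fin (n+1) // p.1 < p.2},
      (if consec A p.1.1 p.1.2 ∧ k = p.1.2 then (1:ℝ) else 0) =
      if k ∈ A ∧ k ≠ 0 then 1 else 0 := by
  by_cases hk : k ∈ A ∧ k ≠ 0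
  · obtain ⟨t, ht⟩ := exists_pred hk.1 h0 hk.2
    rw [if_pos hk]
    refine Finset.sum_eq_single_of_mem (⟨(t, k), ht.lt⟩ :
        {p : Fin (n+1) × Fin (n+1) // p.1 < p.2}) (Finset.mem_univ _) ?_ |>.trans
      (if_pos ⟨ht, rfl⟩)
    rintro ⟨⟨i', j'⟩, hij'⟩ - hne
    rw [if_neg]
    rintro ⟨hc, rfl⟩
    exact hne (Subtype.ext (Prod.ext (consec_pred_unique hc ht) rfl))
  · rw [if_neg hk]
    refine Finset.sum_eq_zero ?_
    rintro ⟨⟨i', j'⟩, hij'⟩ -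
    rw [if_neg]
    rintro ⟨hc, rfl⟩
    exact hk ⟨hc.2.1, fun h0' => absurd (lt_of_lt_of_le hc.2.2.1 (le_of_eq h0')) (by simp)⟩

lemma S_pathFlow (A : Finset (Fin (n+1))) (h0 : 0 ∈ A) (k : Fin (n+1)) :
    ∑ e, pathFlow A e * rootC n e k =
      (if k = 0 then 1 else 0) - (if k = topV A then 1 else 0) := by
  rw [Fintype.sum_sum_type]
  have hr : ∀ i : Fin (n+1), pathFlow A (Sum.inr i) * rootC n (Sum.inr i) k = 0 := by
    intro i; simp [pathFlow]
  rw [Finset.sum_congr rfl (fun i _ => hr i), Finset.sum_const_zero, add_zero]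
  rw [Fintype.sum_prod_type]
  have hsplit : ∀ p : {p : Fin (n+1) × Fin (n+1) // p.1 < p.2},
      ∑ b : Bool, pathFlow A (Sum.inl (p, b)) * rootC n (Sum.inl (p, b)) k =
      (if consec A p.1.1 p.1.2 ∧ k = p.1.1 then (1:ℝ) else 0)
        - (if consec A p.1.1 p.1.2 ∧ k = p.1.2 then (1:ℝ) else 0) := by
    intro p
    rw [Fintype.sum_bool]
    have h1 : pathFlow A (Sum.inl (p, true)) = 0 := pathFlow_pose A p.1.1 p.1.2 p.2
    have h2 : pathFlow A (Sum.inl (p, false)) = if consec A p.1.1 p.1.2 then 1 else 0 :=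
      pathFlow_neg A p.1.1 p.1.2 p.2
    have h3 : rootC n (Sum.inl (p, false)) k =
        (if k = p.1.1 then 1 else 0) - (if k = p.1.2 then 1 else 0) :=
      root_neg p.1.1 p.1.2 p.2 k
    rw [h1, h2, h3, zero_mul, zero_add, ite_mul_ite_sub]
  rw [Finset.sum_congr rfl (fun p _ => hsplit p), Finset.sum_sub_distrib,
    sum_consec_left A k, sum_consec_right A h0 k]
  have htopmem : topV A ∈ A := topV_mem ⟨0, h0⟩
  by_cases hk0 : k = 0 <;> by_cases hkA : k ∈ A <;> by_cases hkt : k = topV A <;>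
    simp_all <;> try ring

lemma S_srcFlow (A B : Finset (Fin (n+1))) (k : Fin (n+1)) :
    ∑ e, srcFlow A B e * rootC n e k = rootC n (srcE A B) k := by
  unfold srcFlow
  have hterm : ∀ e : EdgeC n, (if e = srcE A B then (1:ℝ) else 0) * rootC n e k =
      if e = srcE A B then rootC n e k else 0 := by
    intro e; split_ifs <;> ring
  rw [Finset.sum_congr rfl fun e _ => hterm e,
    Finset.sum_ite_eq' Finset.univ (srcE A B) (fun e => rootC n e k)]
  simp

lemma vflow_mem_CRYC (A B : Finset (Fin (n+1))) (h0A : 0 ∈ A) (h0B : 0 ∈ B) :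
    vflow A B ∈ CRYC n := by
  rw [mem_CRYC_iff]
  refine ⟨vflow_nonneg A B, fun k => ?_⟩
  unfold vflow
  have hterm : ∀ e : EdgeC n, (pathFlow A e + pathFlow B e + srcFlow A B e) * rootC n e k =
      pathFlow A e * rootC n e k + pathFlow B e * rootC n e k + srcFlow A B e * rootC n e k :=
    fun e => by ring
  rw [Finset.sum_congr rfl fun e _ => hterm e, Finset.sum_add_distrib, Finset.sum_add_distrib,
    S_pathFlow A h0A k, S_pathFlow B h0B k, S_srcFlow A B k, root_srcE]
  split_ifs <;> ring

lemma srcE_ne_neg (A B : Finset (Fin (n+1))) (i j : Fin (n+1)) (hij : i < j) :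
    srcE A B ≠ neg i j hij := by
  unfold srcE
  split_ifs
  · exact fun hc => neg_ne_loope hc.symm
  · exact fun hc => neg_ne_pose hc.symm

lemma vflow_neg_val (A B : Finset (Fin (n+1))) (i j : Fin (n+1)) (hij : i < j) :
    vflow A B (neg i j hij) =
      (if consec A i j then (1:ℝ) else 0) + (if consec B i j then (1:ℝ) else 0) := by
  unfold vflow srcFlow
  have hne : (neg i j hij : EdgeC n) ≠ srcE A B := fun hc => srcE_ne_neg A B i j hij hc.symm
  rw [pathFlow_neg, pathFlow_neg, if_neg hne, add_zero]

lemma pathFlow_srcE (A B C : Finset (Fin (n+1))) : pathFlow C (srcE A B) = 0 := by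
  unfold srcE
  split_ifs
  · exact pathFlow_loope C _
  · exact pathFlow_pose C _ _ _

lemma vflow_srcE (A B : Finset (Fin (n+1))) : vflow A B (srcE A B) = 1 := by
  unfold vflow srcFlow
  rw [pathFlow_srcE, pathFlow_srcE, if_pos rfl]
  ring

lemma vflow_ne_zero {A B : Finset (Fin (n+1))} {e : EdgeC n} (h : vflow A B e ≠ 0) :
    (∃ i j, ∃ hij : i < j, e = neg i j hij ∧ (consec A i j ∨ consec B i j)) ∨ e = srcE A B := by
  by_cases hA : pathFlow A e ≠ 0
  · obtain ⟨i, j, hij, he, hc⟩ := pathFlow_ne_zero hA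
    exact Or.inl ⟨i, j, hij, he, Or.inl hc⟩
  by_cases hB : pathFlow B e ≠ 0
  · obtain ⟨i, j, hij, he, hc⟩ := pathFlow_ne_zero hB
    exact Or.inl ⟨i, j, hij, he, Or.inr hc⟩
  push_neg at hA hB
  right
  by_contra hne
  apply h
  unfold vflow srcFlow
  rw [hA, hB, if_neg hne]
  ring

/-- validity of a pair of chains: both contain the root vertex `0`, and their
intersection is downward closed in their union -/
def Valid (A B : Finset (Fin (n+1))) : Prop :=
  0 ∈ A ∧ 0 ∈ B ∧ ∀ u ∈ A ∪ B, ∀ w ∈ A ∩ B, u ≤ w → u ∈ A ∩ B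

lemma Valid.comm {A B : Finset (Fin (n+1))} (h : Valid A B) : Valid B A := by
  obtain ⟨h1, h2, h3⟩ := h
  refine ⟨h2, h1, fun u hu w hw hle => ?_⟩
  rw [Finset.union_comm] at hu
  rw [Finset.inter_comm] at hw ⊢
  exact h3 u hu w hw hle

lemma coordEq {x : EdgeC n → ℝ} (hx : x ∈ CRYC n) {k : Fin (n+1)} (hk : k ≠ 0) :
    ∑ e, x e * rootC n e k = 0 := by
  rw [(mem_CRYC_iff.1 hx).2 k, if_neg hk]

lemma exists_down {x : EdgeC n → ℝ} (hx : x ∈ CRYC n) {u : Fin (n+1)} (hu : u ≠ 0)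
    (hprod : ∃ e, x e ≠ 0 ∧ 0 < rootC n e u) :
    ∃ t, ∃ htu : t < u, x (neg t u htu) ≠ 0 := by
  by_contra hno
  push_neg at hno
  obtain ⟨e₀, he₀, hr₀⟩ := hprod
  have hge : ∀ e : EdgeC n, 0 ≤ x e * rootC n e u := by
    intro e
    have hxe := (mem_CRYC_iff.1 hx).1 e
    rcases e with ⟨⟨⟨i, j⟩, hij⟩, b⟩ | i
    · rcases b
      · -- negative edge
        by_cases hju : u = j
        · subst hju
          have : x (neg i u hij) = 0 := hno i hij
          rw [show (Sum.inl (⟨⟨(i, u), hij⟩, false⟩) : EdgeC n) = neg i u hij from rfl, this,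
            zero_mul]
        · have hr : rootC n (neg i j hij) u = (if u = i then 1 else 0) - (if u = j then 1 else 0) :=
            root_neg i j hij u
          rw [show (Sum.inl (⟨⟨(i, j), hij⟩, false⟩) : EdgeC n) = neg i j hij from rfl, hr,
            if_neg hju, sub_zero]
          have hxe' := (mem_CRYC_iff.1 hx).1 (neg i j hij)
          split_ifs <;> [linarith; linarith]
      · have hr : rootC n (pose i j hij) u = (if u = i then 1 else 0) + (if u = j then 1 else 0) :=
          root_pose i j hij u
        rw [show (Sum.inl (⟨⟨(i, j), hij⟩, true⟩) : EdgeC n) = pose i j hij from rfl, hr]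
        have hxe' := (mem_CRYC_iff.1 hx).1 (pose i j hij)
        split_ifs <;> linarith
    · rw [show (Sum.inr i : EdgeC n) = loope i from rfl, root_loope]
      have hxe' := (mem_CRYC_iff.1 hx).1 (loope i)
      split_ifs <;> linarith
  have hpos : 0 < ∑ e, x e * rootC n e u := by
    refine Finset.sum_pos' (fun e _ => hge e) ⟨e₀, Finset.mem_univ _, ?_⟩
    have hxe := (mem_CRYC_iff.1 hx).1 e₀
    exact mul_pos (lt_of_le_of_ne hxe (Ne.symm he₀)) hr₀
  exact absurd (coordEq hx hu) (ne_of_gt hpos)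

lemma descent {x : EdgeC n → ℝ} (hx : x ∈ CRYC n) :
    ∀ u : Fin (n+1), (∃ e, x e ≠ 0 ∧ 0 < rootC n e u) →
    ∃ A : Finset (Fin (n+1)), 0 ∈ A ∧ topV A = u ∧
      ∀ i j (hij : i < j), consec A i j → x (neg i j hij) ≠ 0 := by
  suffices H : ∀ m : ℕ, ∀ u : Fin (n+1), u.val < m → ((∃ e, x e ≠ 0 ∧ 0 < rootC n e u) →
      ∃ A : Finset (Fin (n+1)), 0 ∈ A ∧ topV A = u ∧
        ∀ i j (hij : i < j), consec A i j → x (neg i j hij) ≠ 0) by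
    exact fun u => H (n + 2) u (by omega)
  intro m
  induction m with
  | zero => exact fun u hu => absurd hu (by omega)
  | succ m ih =>
    intro u hum hprod
    by_cases hu0 : u = 0
    · subst hu0
      refine ⟨{0}, Finset.mem_singleton_self 0, ?_, ?_⟩
      · rw [topV, Finset.sup_singleton]; rfl
      · exact fun i j hij hc => absurd hc (consec_singleton i j 0)
    · obtain ⟨t, htu, hxt⟩ := exists_down hx hu0 hprod
      have hprod' : ∃ e, x e ≠ 0 ∧ 0 < rootC n e t := by
        refine ⟨neg t u htu, hxt, ?_⟩
        rw [root_neg, if_pos rfl, if_neg (ne_of_lt htu), sub_zero]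
        norm_num
      have htval : t.val < m := by
        have h1 : t.val < u.val := htu
        omega
      obtain ⟨A', h0', htop', hsupp'⟩ := ih t htval hprod'
      have hAne : A'.Nonempty := ⟨0, h0'⟩
      have htopu : topV A' < u := by rw [htop']; exact htu
      refine ⟨insert u A', Finset.mem_insert_of_mem h0', ?_, ?_⟩
      · rw [topV, Finset.sup_insert]
        have : A'.sup id ≤ u := by rw [show A'.sup id = topV A' from rfl, htop']; exact htu.le
        exact sup_eq_left.2 this
      · intro i j hij hc
        rw [consec_insert_top hAne htopu] at hc
        rcases hc with hc | ⟨hi, hj⟩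
        · exact hsupp' i j hij hc
        · subst hj
          have hit : i = t := by rw [hi, htop']
          subst hit
          exact hxt
lemma sum_root_eq_two {x : EdgeC n → ℝ} (hx : x ∈ CRYC n) :
    ∑ e, (∑ k, x e * rootC n e k) = 2 := by
  have hS := (mem_CRYC_iff.1 hx).2
  have h2 : ∑ k : Fin (n+1), (if k = (0 : Fin (n+1)) then (2:ℝ) else 0) = 2 := by
    rw [Finset.sum_ite_eq' Finset.univ (0 : Fin (n+1)) (fun _ => (2:ℝ))]
    simp
  rw [← Finset.sum_comm, Finset.sum_congr rfl fun k _ => hS k, h2]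

lemma exists_source {x : EdgeC n → ℝ} (hx : x ∈ CRYC n) :
    (∃ i j, ∃ hij : i < j, x (pose i j hij) ≠ 0) ∨ (∃ i, x (loope i) ≠ 0) := by
  by_contra hno
  push_neg at hno
  obtain ⟨hposz, hloopz⟩ := hno
  have hz : ∀ e : EdgeC n, ∑ k, x e * rootC n e k = 0 := by
    intro e
    rcases e with ⟨⟨⟨i, j⟩, hij⟩, b⟩ | i
    · rcases b
      · rw [← Finset.mul_sum]
        have : ∑ k, rootC n (neg i j hij) k = 0 := by
          have hterm : ∀ k, rootC n (neg i j hij) k =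
              (if k = i then (1:ℝ) else 0) - (if k = j then 1 else 0) := root_neg i j hij
          rw [Finset.sum_congr rfl fun k _ => hterm k, Finset.sum_sub_distrib,
            Finset.sum_ite_eq' Finset.univ i (fun _ => (1:ℝ)),
            Finset.sum_ite_eq' Finset.univ j (fun _ => (1:ℝ))]
          simp
        rw [show (Sum.inl (⟨⟨(i, j), hij⟩, false⟩) : EdgeC n) = neg i j hij from rfl, this,
          mul_zero]
      · rw [show (Sum.inl (⟨⟨(i, j), hij⟩, true⟩) : EdgeC n) = pose i j hij from rfl,
          hposz i j hij]
        simp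
    · rw [show (Sum.inr i : EdgeC n) = loope i from rfl, hloopz i]
      simp
  have := sum_root_eq_two hx
  rw [Finset.sum_congr rfl fun e _ => hz e, Finset.sum_const_zero] at this
  norm_num at this

lemma pose_eq_of {i j i' j' : Fin (n+1)} {h : i < j} {h' : i' < j'} (e1 : i = i')
    (e2 : j = j') : (pose i j h : EdgeC n) = pose i' j' h' := by
  subst e1; subst e2; rfl

lemma loope_eq_of {i i' : Fin (n+1)} (e1 : i = i') : (loope i : EdgeC n) = loope i' := by
  subst e1; rfl

lemma topV_singleton_zero : topV ({0} : Finset (Fin (n+1))) = 0 := by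
  rw [topV, Finset.sup_singleton]; rfl

lemma exists_valid_in_supp {x : EdgeC n → ℝ} (hx : x ∈ CRYC n) :
    ∃ A B, Valid A B ∧ ∀ e, vflow A B e ≠ 0 → x e ≠ 0 := by
  have hsupp_of : ∀ (A B : Finset (Fin (n+1))),
      (∀ i j (hij : i < j), consec A i j → x (neg i j hij) ≠ 0) →
      (∀ i j (hij : i < j), consec B i j → x (neg i j hij) ≠ 0) →
      x (srcE A B) ≠ 0 → ∀ e, vflow A B e ≠ 0 → x e ≠ 0 := by
    intro A B hA hB hs e he
    rcases vflow_ne_zero he with ⟨i, j, hij, rfl, hc | hc⟩ | rfl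
    · exact hA i j hij hc
    · exact hB i j hij hc
    · exact hs
  rcases exists_source hx with ⟨i, j, hij, hp⟩ | ⟨i, hl⟩
  · -- positive edge source
    have hij' : i ≠ j := ne_of_lt hij
    have hprodj : ∃ e, x e ≠ 0 ∧ 0 < rootC n e j := by
      refine ⟨pose i j hij, hp, ?_⟩
      rw [root_pose, if_pos rfl, if_neg (Ne.symm hij')]
      norm_num
    obtain ⟨Sj, h0j, htopj, hsuppj⟩ := descent hx j hprodj
    by_cases hi0 : i = 0
    · subst hi0
      refine ⟨{0}, Sj, ⟨Finset.mem_singleton_self 0, h0j, ?_⟩,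
        hsupp_of _ _ (fun a b hab hcons => absurd hcons (consec_singleton a b 0)) hsuppj ?_⟩
      · intro u hu w hw hle
        have hw0 : w = 0 := Finset.mem_singleton.1 (Finset.mem_inter.1 hw).1
        have hu0 : u = 0 := le_antisymm (hw0 ▸ hle) (Fin.zero_le u)
        subst hu0
        exact Finset.mem_inter.2 ⟨Finset.mem_singleton_self 0, h0j⟩
      · have hne : topV ({0} : Finset (Fin (n+1))) ≠ topV Sj := by
          rw [topV_singleton_zero, htopj]; exact ne_of_lt hij
        have hsrc : srcE {0} Sj = pose 0 j hij := by
          unfold srcE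
          rw [dif_neg hne]
          refine pose_eq_of ?_ ?_
          · rw [topV_singleton_zero, htopj]; exact min_eq_left (Fin.zero_le j)
          · rw [topV_singleton_zero, htopj]; exact max_eq_right (Fin.zero_le j)
        rw [hsrc]; exact hp
    · have hprodi : ∃ e, x e ≠ 0 ∧ 0 < rootC n e i := by
        refine ⟨pose i j hij, hp, ?_⟩
        rw [root_pose, if_pos rfl, if_neg hij']
        norm_num
      obtain ⟨Si, h0i, htopi, hsuppi⟩ := descent hx i hprodi
      set c := topV (Si ∩ Sj) with hcdef
      have hcap0 : 0 ∈ Si ∩ Sj := Finset.mem_inter.2 ⟨h0i, h0j⟩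
      have hcmem : c ∈ Si ∩ Sj := topV_mem ⟨0, hcap0⟩
      have hcSi : c ∈ Si := (Finset.mem_inter.1 hcmem).1
      have hcSj : c ∈ Sj := (Finset.mem_inter.1 hcmem).2
      have hci : c ≤ i := htopi ▸ le_topV hcSi
      have hcj : c < j := lt_of_le_of_lt hci hij
      set B := (Sj.filter (fun v => c ≤ v)) ∪ (Si.filter (fun v => v ≤ c)) with hBdef
      have h0B : 0 ∈ B := Finset.mem_union_right _ (Finset.mem_filter.2 ⟨h0i, Fin.zero_le c⟩)
      have hjSj : j ∈ Sj := htopj ▸ topV_mem ⟨0, h0j⟩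
      have hjB : j ∈ B := Finset.mem_union_left _ (Finset.mem_filter.2 ⟨hjSj, hcj.le⟩)
      have hBel : ∀ u, u ∈ B → (u ∈ Sj ∧ c ≤ u) ∨ (u ∈ Si ∧ u ≤ c) := by
        intro u hu
        rcases Finset.mem_union.1 hu with h | h
        · exact Or.inl ⟨(Finset.mem_filter.1 h).1, (Finset.mem_filter.1 h).2⟩
        · exact Or.inr ⟨(Finset.mem_filter.1 h).1, (Finset.mem_filter.1 h).2⟩
      have hcB : c ∈ B := Finset.mem_union_right _ (Finset.mem_filter.2 ⟨hcSi, le_rfl⟩)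
      have hDC : ∀ u ∈ Si ∪ B, ∀ w ∈ Si ∩ B, u ≤ w → u ∈ Si ∩ B := by
        intro u hu w hw hle
        have hwc : w ≤ c := by
          have hw' := Finset.mem_inter.1 hw
          rcases hBel w hw'.2 with ⟨hwj, hcw⟩ | ⟨-, hwc⟩
          · exact le_topV (Finset.mem_inter.2 ⟨hw'.1, hwj⟩)
          · exact hwc
        have huc : u ≤ c := hle.trans hwc
        rcases Finset.mem_union.1 hu with huA | huB
        · exact Finset.mem_inter.2 ⟨huA, Finset.mem_union_right _
            (Finset.mem_filter.2 ⟨huA, huc⟩)⟩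
        · rcases hBel u huB with ⟨huj, hcu⟩ | ⟨hui, -⟩
          · have huceq : u = c := le_antisymm huc hcu
            exact Finset.mem_inter.2 ⟨huceq ▸ hcSi, huB⟩
          · exact Finset.mem_inter.2 ⟨hui, huB⟩
      have hglue : ∀ a b (hab : a < b), consec B a b → consec Si a b ∨ consec Sj a b := by
        intro a b hab hcons
        by_cases hbc : c < b
        · have hbJ : b ∈ Sj := by
            rcases hBel b hcons.2.1 with ⟨h1, -⟩ | ⟨-, h2⟩
            · exact h1
            · exact absurd hbc (not_lt.2 h2)
          have hca : c ≤ a := consec_le_pred hcons hcB hbc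
          have haJ : a ∈ Sj := by
            rcases hBel a hcons.1 with ⟨h1, -⟩ | ⟨h1, h2⟩
            · exact h1
            · have hac : a = c := le_antisymm h2 hca
              exact hac ▸ hcSj
          refine Or.inr ⟨haJ, hbJ, hab, fun k hk => ?_⟩
          by_cases hka : k ≤ a
          · exact Or.inl hka
          · push_neg at hka
            refine Or.inr (le_of_not_gt fun hkb => ?_)
            have hkB : k ∈ B := Finset.mem_union_left _
              (Finset.mem_filter.2 ⟨hk, hca.trans hka.le⟩)
            rcases hcons.2.2.2 k hkB with h | h
            · exact absurd hka (not_lt.2 h)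
            · exact absurd hkb (not_lt.2 h)
        · push_neg at hbc
          have hbI : b ∈ Si := by
            rcases hBel b hcons.2.1 with ⟨h1, h2⟩ | ⟨h1, -⟩
            · have hbceq : b = c := le_antisymm hbc h2
              exact hbceq ▸ hcSi
            · exact h1
          have haI : a ∈ Si := by
            rcases hBel a hcons.1 with ⟨h1, h2⟩ | ⟨h1, -⟩
            · exact absurd (lt_of_lt_of_le (lt_of_le_of_lt h2 hab) hbc) (lt_irrefl c)
            · exact h1
          refine Or.inl ⟨haI, hbI, hab, fun k hk => ?_⟩
          by_cases hka : k ≤ a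
          · exact Or.inl hka
          · push_neg at hka
            refine Or.inr (le_of_not_gt fun hkb => ?_)
            have hkB : k ∈ B := Finset.mem_union_right _
              (Finset.mem_filter.2 ⟨hk, hkb.le.trans hbc⟩)
            rcases hcons.2.2.2 k hkB with h | h
            · exact absurd hka (not_lt.2 h)
            · exact absurd hkb (not_lt.2 h)
      have htopB : topV B = j := by
        refine le_antisymm ?_ (le_topV hjB)
        rw [topV]
        refine Finset.sup_le fun b hb => ?_
        rcases hBel b hb with ⟨h1, -⟩ | ⟨-, h2⟩
        · exact htopj ▸ le_topV h1
        · exact (h2.trans hci).trans hij.le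
      refine ⟨Si, B, ⟨h0i, h0B, hDC⟩, hsupp_of _ _ hsuppi (fun a b hab hcons => ?_) ?_⟩
      · rcases hglue a b hab hcons with h | h
        · exact hsuppi a b hab h
        · exact hsuppj a b hab h
      · have hne : topV Si ≠ topV B := by rw [htopi, htopB]; exact hij'
        have hsrc : srcE Si B = pose i j hij := by
          unfold srcE
          rw [dif_neg hne]
          refine pose_eq_of ?_ ?_
          · rw [htopi, htopB]; exact min_eq_left hij.le
          · rw [htopi, htopB]; exact max_eq_right hij.le
        rw [hsrc]; exact hp
  · -- loop source
    by_cases hi0 : i = 0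
    · subst hi0
      refine ⟨{0}, {0}, ⟨Finset.mem_singleton_self 0, Finset.mem_singleton_self 0, ?_⟩,
        hsupp_of _ _ (fun a b hab hcons => absurd hcons (consec_singleton a b 0))
          (fun a b hab hcons => absurd hcons (consec_singleton a b 0)) ?_⟩
      · intro u hu w hw hle
        rw [Finset.union_self] at hu
        exact Finset.mem_inter.2 ⟨hu, hu⟩
      · have hsrc : srcE ({0} : Finset (Fin (n+1))) {0} = loope 0 := by
          unfold srcE
          rw [dif_pos rfl]
          exact loope_eq_of topV_singleton_zero
        rw [hsrc]; exact hl
    · have hprodi : ∃ e, x e ≠ 0 ∧ 0 < rootC n e i := by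
        refine ⟨loope i, hl, ?_⟩
        rw [root_loope, if_pos rfl]
        norm_num
      obtain ⟨A, h0A, htopA, hsuppA⟩ := descent hx i hprodi
      refine ⟨A, A, ⟨h0A, h0A, ?_⟩, hsupp_of _ _ hsuppA hsuppA ?_⟩
      · intro u hu w hw hle
        rw [Finset.union_self] at hu
        exact Finset.mem_inter.2 ⟨hu, hu⟩
      · have hsrc : srcE A A = loope i := by
          unfold srcE
          rw [dif_pos rfl]
          exact loope_eq_of htopA
        rw [hsrc]; exact hl

lemma comb_mem_CRYC {x v : EdgeC n → ℝ} (hx : x ∈ CRYC n) (hv : v ∈ CRYC n) (t : ℝ)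
    (hnn : ∀ e, 0 ≤ x e + t * (x e - v e)) :
    (fun e => x e + t * (x e - v e)) ∈ CRYC n := by
  refine mem_CRYC_iff.2 ⟨hnn, fun k => ?_⟩
  have hterm : ∀ e : EdgeC n, (x e + t * (x e - v e)) * rootC n e k =
      (1 + t) * (x e * rootC n e k) - t * (v e * rootC n e k) := fun e => by ring
  rw [Finset.sum_congr rfl fun e _ => hterm e, Finset.sum_sub_distrib, ← Finset.mul_sum,
    ← Finset.mul_sum, (mem_CRYC_iff.1 hx).2 k, (mem_CRYC_iff.1 hv).2 k]
  ring

lemma extreme_eq_vflow {x : EdgeC n → ℝ} (hx : x ∈ (CRYC n).extremePoints ℝ) :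
    ∃ A B, Valid A B ∧ x = vflow A B := by
  obtain ⟨hxm, hxe⟩ := hx
  obtain ⟨A, B, hval, hsupp⟩ := exists_valid_in_supp hxm
  refine ⟨A, B, hval, ?_⟩
  have hvm : vflow A B ∈ CRYC n := vflow_mem_CRYC A B hval.1 hval.2.1
  set v := vflow A B with hvdef
  have hxnn := (mem_CRYC_iff.1 hxm).1
  have hvnn := (mem_CRYC_iff.1 hvm).1
  obtain ⟨ε, hε0, hε1, hεle'⟩ : ∃ ε : ℝ, 0 < ε ∧ ε ≤ 1 ∧
      ∀ e ∈ (Finset.univ : Finset (EdgeC n)), ε * v e ≤ x e := by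
    have himp : ∀ e, v e ≠ 0 → x e ≠ 0 := hsupp
    induction (Finset.univ : Finset (EdgeC n)) using Finset.induction_on with
    | empty => exact ⟨1, one_pos, le_rfl, fun e he => absurd he (Finset.notMem_empty e)⟩
    | @insert a s ha ih =>
      obtain ⟨ε, hε0, hε1, hεs⟩ := ih
      by_cases hva : v a = 0
      · refine ⟨ε, hε0, hε1, fun e he => ?_⟩
        rcases Finset.mem_insert.1 he with rfl | he'
        · rw [hva, mul_zero]; exact hxnn e
        · exact hεs e he'
      · have hvpos : 0 < v a := lt_of_le_of_ne (hvnn a) (Ne.symm hva)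
        have hxpos : 0 < x a := lt_of_le_of_ne (hxnn a) (Ne.symm (himp a hva))
        refine ⟨min ε (x a / v a), lt_min hε0 (div_pos hxpos hvpos),
          le_trans (min_le_left _ _) hε1, fun e he => ?_⟩
        rcases Finset.mem_insert.1 he with rfl | he'
        · calc min ε (x e / v e) * v e ≤ (x e / v e) * v e :=
              mul_le_mul_of_nonneg_right (min_le_right _ _) (hvnn e)
            _ = x e := by field_simp
        · calc min ε (x a / v a) * v e ≤ ε * v e :=
              mul_le_mul_of_nonneg_right (min_le_left _ _) (hvnn e)
            _ ≤ x e := hεs e he'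
  have hεle : ∀ e, ε * v e ≤ x e := fun e => hεle' e (Finset.mem_univ e)
  set y := fun e => x e + ε * (x e - v e) with hy
  set z := fun e => x e + (-ε) * (x e - v e) with hz
  have hym : y ∈ CRYC n := by
    refine comb_mem_CRYC hxm hvm ε fun e => ?_
    have := hεle e
    have := hxnn e
    nlinarith [hεle e, hxnn e, hε0.le]
  have hzm : z ∈ CRYC n := by
    refine comb_mem_CRYC hxm hvm (-ε) fun e => ?_
    have h1 : x e + (-ε) * (x e - v e) = (1 - ε) * x e + ε * v e := by ring
    rw [h1]
    have := hvnn e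
    have := hxnn e
    nlinarith [hvnn e, hxnn e, hε0.le, hε1]
  have hseg : x ∈ openSegment ℝ y z := by
    refine ⟨1/2, 1/2, by norm_num, by norm_num, by norm_num, ?_⟩
    funext e
    simp only [hy, hz, Pi.add_apply, Pi.smul_apply, smul_eq_mul]
    ring
  have heq := hxe hym hzm hseg
  funext e
  have h1 : x e + ε * (x e - v e) = x e := congrFun heq e
  have h2 : ε * (x e - v e) = 0 := by linarith [h1]
  have h3 : x e - v e = 0 := by
    rcases mul_eq_zero.1 h2 with h | h
    · exact absurd h (ne_of_gt hε0)
    · exact h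
  linarith [h3]

lemma down_induction {Q : Fin (n+1) → Prop} (H : ∀ u, (∀ w, u < w → Q w) → Q u) : ∀ u, Q u := by
  have key : ∀ m : ℕ, ∀ u : Fin (n+1), n - u.val < m → Q u := by
    intro m
    induction m with
    | zero => intro u hu; omega
    | succ m ih =>
      intro u _
      refine H u fun w hw => ih w ?_
      have h1 : u.val < w.val := hw
      have h2 : w.val ≤ n := Nat.lt_succ_iff.1 w.isLt
      omega
  exact fun u => key (n+1) u (by omega)

lemma root_neg_right (i j : Fin (n+1)) (hij : i < j) : rootC n (neg i j hij) j = -1 := by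
  rw [root_neg, if_neg (Ne.symm (ne_of_lt hij)), if_pos rfl]; ring

lemma root_neg_left (i j : Fin (n+1)) (hij : i < j) : rootC n (neg i j hij) i = 1 := by
  rw [root_neg, if_pos rfl, if_neg (ne_of_lt hij)]; ring

section Uniqueness

variable {A B : Finset (Fin (n+1))} {d : EdgeC n → ℝ}

/-- member of the union below the top of the intersection is in the intersection -/
lemma mem_inter_of_le (hval : Valid A B) {u : Fin (n+1)} (hu : u ∈ A ∪ B)
    (hle : u ≤ topV (A ∩ B)) : u ∈ A ∩ B :=
  hval.2.2 u hu (topV (A ∩ B)) (topV_mem ⟨0, Finset.mem_inter.2 ⟨hval.1, hval.2.1⟩⟩) hle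

lemma not_mem_B_of_gt (hval : Valid A B) {u : Fin (n+1)} (hu : u ∈ A)
    (hgt : topV (A ∩ B) < u) : u ∉ B := fun hB =>
  absurd (le_topV (Finset.mem_inter.2 ⟨hu, hB⟩)) (not_le.2 hgt)

lemma topA_ne_topB (hval : Valid A B) {u : Fin (n+1)} (hu : u ∈ A)
    (hgt : topV (A ∩ B) < u) : topV A ≠ topV B := by
  intro hc
  have h1 : topV A ∈ A := topV_mem ⟨0, hval.1⟩
  have h2 : topV A ∈ B := hc ▸ topV_mem ⟨0, hval.2.1⟩
  have := le_topV (Finset.mem_inter.2 ⟨h1, h2⟩)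
  exact absurd (lt_of_lt_of_le hgt (le_topV hu)) (not_lt.2 this)

/-- consecutive pairs whose top is in the merged region agree between `A` and `B` -/
lemma consec_merged (hval : Valid A B) {t u : Fin (n+1)} (hle : u ≤ topV (A ∩ B))
    (hc : consec A t u) : consec B t u := by
  have huAB : u ∈ A ∩ B := mem_inter_of_le hval (Finset.mem_union_left _ hc.2.1) hle
  have htAB : t ∈ A ∩ B := mem_inter_of_le hval (Finset.mem_union_left _ hc.1)
    (le_trans hc.2.2.1.le hle)
  refine ⟨(Finset.mem_inter.1 htAB).2, (Finset.mem_inter.1 huAB).2, hc.2.2.1, fun k hk => ?_⟩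
  by_cases hkt : k ≤ t
  · exact Or.inl hkt
  · push_neg at hkt
    refine Or.inr (le_of_not_gt fun hku => ?_)
    have hkAB : k ∈ A ∩ B := mem_inter_of_le hval (Finset.mem_union_right _ hk)
      (le_trans hku.le hle)
    rcases hc.2.2.2 k (Finset.mem_inter.1 hkAB).1 with h | h
    · exact absurd hkt (not_lt.2 h)
    · exact absurd hku (not_lt.2 h)

lemma supp_root_cases (hd0 : ∀ e, vflow A B e = 0 → d e = 0) (u : Fin (n+1)) (e : EdgeC n)
    (hne : d e * rootC n e u ≠ 0) :
    (∃ t, ∃ htu : t < u, e = neg t u htu ∧ (consec A t u ∨ consec B t u)) ∨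
    (∃ w, ∃ huw : u < w, e = neg u w huw ∧ (consec A u w ∨ consec B u w)) ∨
    (e = srcE A B ∧ rootC n (srcE A B) u ≠ 0) := by
  have hdne : d e ≠ 0 := fun h => hne (by rw [h, zero_mul])
  have hrne : rootC n e u ≠ 0 := fun h => hne (by rw [h, mul_zero])
  have hv : vflow A B e ≠ 0 := fun h => hdne (hd0 e h)
  rcases vflow_ne_zero hv with ⟨i, j, hij, rfl, hc⟩ | rfl
  · have hu : u = i ∨ u = j := by
      by_contra hcon
      push_neg at hcon
      apply hrne
      rw [root_neg, if_neg hcon.1, if_neg hcon.2]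
      ring
    rcases hu with rfl | rfl
    · exact Or.inr (Or.inl ⟨j, hij, rfl, hc⟩)
    · exact Or.inl ⟨i, hij, rfl, hc⟩
  · exact Or.inr (Or.inr ⟨rfl, hrne⟩)

lemma sum_eq_on_small (d : EdgeC n → ℝ) (k : Fin (n+1)) (F : Finset (EdgeC n))
    (h : ∀ e ∉ F, d e * rootC n e k = 0) :
    ∑ e, d e * rootC n e k = ∑ e ∈ F, d e * rootC n e k :=
  (Finset.sum_subset (Finset.subset_univ F) (fun e _ he => h e he)).symm

lemma neg_ne_neg_of {i j i' j' : Fin (n+1)} {h : i < j} {h' : i' < j'}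
    (hne : i ≠ i' ∨ j ≠ j') : (neg i j h : EdgeC n) ≠ neg i' j' h' := by
  intro hc
  obtain ⟨e1, e2⟩ := neg_injective hc
  rcases hne with h | h
  · exact h e1
  · exact h e2

lemma root_srcE_of_ne {u : Fin (n+1)} (huA : u ≠ topV A)
    (huB : u ≠ topV B) : rootC n (srcE A B) u = 0 := by
  rw [root_srcE, if_neg huA, if_neg huB]; ring

/-- Claim 1: on the side edges of the chain `A` above the merge point, `d` equals its
value on the source edge. -/
lemma side_prop (hval : Valid A B) (hd0 : ∀ e, vflow A B e = 0 → d e = 0)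
    (hsum : ∀ k, ∑ e, d e * rootC n e k = 0) :
    ∀ u, u ∈ A → topV (A ∩ B) < u → ∀ t (htu : t < u), consec A t u →
      d (neg t u htu) = d (srcE A B) := by
  refine down_induction (fun u IH hu hcu t htu hcons => ?_)
  have huB : u ∉ B := not_mem_B_of_gt hval hu hcu
  have habne : topV A ≠ topV B := topA_ne_topB hval hu hcu
  have htopBB : topV B ∈ B := topV_mem ⟨0, hval.2.1⟩
  have hunetopB : u ≠ topV B := fun hc => huB (hc ▸ htopBB)
  by_cases hutop : u = topV A
  · -- top of the A chain: equation at u involves the source edge and the down edge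
    have hF : ∀ e ∉ ({neg t u htu, srcE A B} : Finset (EdgeC n)), d e * rootC n e u = 0 := by
      intro e heF
      by_contra hne0
      rcases supp_root_cases hd0 u e hne0 with ⟨t', ht', rfl, hc'⟩ | ⟨w', hw', rfl, hc'⟩ |
        ⟨rfl, -⟩
      · rcases hc' with hc' | hc'
        · have : t' = t := consec_pred_unique hc' hcons
          subst this
          exact heF (Finset.mem_insert_self _ _)
        · exact huB hc'.2.1
      · rcases hc' with hc' | hc'
        · exact absurd (lt_of_lt_of_le hw' (le_topV hc'.2.1)) (by rw [hutop]; exact lt_irrefl _)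
        · exact huB hc'.1
      · exact heF (Finset.mem_insert_of_mem (Finset.mem_singleton_self _))
    have hnesrc : (neg t u htu : EdgeC n) ≠ srcE A B := fun hc => srcE_ne_neg A B t u htu hc.symm
    have hsum2 := hsum u
    rw [sum_eq_on_small d u _ hF, Finset.sum_pair hnesrc, root_neg_right, root_srcE,
      if_pos hutop, if_neg hunetopB] at hsum2
    linarith [hsum2]
  · -- middle of the A chain: equation at u involves the up edge and the down edge
    obtain ⟨w, hcw⟩ := exists_succ hu hutop
    have huw : u < w := hcw.2.2.1
    have hwA : w ∈ A := hcw.2.1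
    have hF : ∀ e ∉ ({neg t u htu, neg u w huw} : Finset (EdgeC n)), d e * rootC n e u = 0 := by
      intro e heF
      by_contra hne0
      rcases supp_root_cases hd0 u e hne0 with ⟨t', ht', rfl, hc'⟩ | ⟨w', hw', rfl, hc'⟩ |
        ⟨rfl, hroot⟩
      · rcases hc' with hc' | hc'
        · have : t' = t := consec_pred_unique hc' hcons
          subst this
          exact heF (Finset.mem_insert_self _ _)
        · exact huB hc'.2.1
      · rcases hc' with hc' | hc'
        · have : w' = w := consec_succ_unique hc' hcw
          subst this
          exact heF (Finset.mem_insert_of_mem (Finset.mem_singleton_self _))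
        · exact huB hc'.1
      · rcases (by
            by_contra hcon
            push_neg at hcon
            exact hroot (root_srcE_of_ne hcon.1 hcon.2) : u = topV A ∨ u = topV B) with
          h | h
        · exact hutop h
        · exact hunetopB h
    have hnene : (neg t u htu : EdgeC n) ≠ neg u w huw :=
      neg_ne_neg_of (Or.inl (ne_of_lt htu))
    have hsum2 := hsum u
    rw [sum_eq_on_small d u _ hF, Finset.sum_pair hnene, root_neg_right, root_neg_left] at hsum2
    have hIH : d (neg u w huw) = d (srcE A B) :=
      IH w huw hwA (lt_trans hcu huw) u huw hcw
    linarith [hsum2, hIH]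

end Uniqueness

section Uniqueness2

variable {A B : Finset (Fin (n+1))} {d : EdgeC n → ℝ}

lemma side_prop_B (hval : Valid A B) (hd0 : ∀ e, vflow A B e = 0 → d e = 0)
    (hsum : ∀ k, ∑ e, d e * rootC n e k = 0) :
    ∀ u, u ∈ B → topV (A ∩ B) < u → ∀ t (htu : t < u), consec B t u →
      d (neg t u htu) = d (srcE A B) := by
  have hd0' : ∀ e, vflow B A e = 0 → d e = 0 := by rw [vflow_comm B A]; exact hd0
  intro u hu hcu t htu hc
  rw [srcE_comm A B]
  exact side_prop hval.comm hd0' hsum u hu (by rwa [Finset.inter_comm B A]) t htu hc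

/-- Claim 2: on merged edges, `d` is twice its source value. -/
lemma merged_prop (hval : Valid A B) (hd0 : ∀ e, vflow A B e = 0 → d e = 0)
    (hsum : ∀ k, ∑ e, d e * rootC n e k = 0) :
    ∀ u, u ∈ A → u ≤ topV (A ∩ B) → u ≠ 0 → ∀ t (htu : t < u), consec A t u →
      d (neg t u htu) = 2 * d (srcE A B) := by
  have h0AB : 0 ∈ A ∩ B := Finset.mem_inter.2 ⟨hval.1, hval.2.1⟩
  have hcA : topV (A ∩ B) ∈ A := (Finset.mem_inter.1 (topV_mem ⟨0, h0AB⟩)).1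
  have hcB : topV (A ∩ B) ∈ B := (Finset.mem_inter.1 (topV_mem ⟨0, h0AB⟩)).2
  refine down_induction (fun u IH hu hle hu0 t htu hcons => ?_)
  have hconsB : consec B t u := consec_merged hval hle hcons
  have huAB : u ∈ A ∩ B := mem_inter_of_le hval (Finset.mem_union_left _ hu) hle
  have huB : u ∈ B := (Finset.mem_inter.1 huAB).2
  by_cases hua : u = topV A
  · by_cases hub : u = topV B
    · -- both tops: the source is the loop at u
      have htopeq : topV A = topV B := by rw [← hua, ← hub]
      have hsrcl : srcE A B = loope (topV A) := by unfold srcE; rw [dif_pos htopeq]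
      have hF : ∀ e ∉ ({neg t u htu, srcE A B} : Finset (EdgeC n)),
          d e * rootC n e u = 0 := by
        intro e heF
        by_contra hne0
        rcases supp_root_cases hd0 u e hne0 with ⟨t', ht', rfl, hc'⟩ | ⟨w', hw', rfl, hc'⟩ |
          ⟨rfl, -⟩
        · have : t' = t := by
            rcases hc' with hc' | hc'
            · exact consec_pred_unique hc' hcons
            · exact consec_pred_unique hc' hconsB
          subst this
          exact heF (Finset.mem_insert_self _ _)
        · rcases hc' with hc' | hc'
          · exact absurd (lt_of_lt_of_le hw' (le_topV hc'.2.1))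
              (by rw [hua]; exact lt_irrefl _)
          · exact absurd (lt_of_lt_of_le hw' (le_topV hc'.2.1))
              (by rw [hub]; exact lt_irrefl _)
        · exact heF (Finset.mem_insert_of_mem (Finset.mem_singleton_self _))
      have hnesrc : (neg t u htu : EdgeC n) ≠ srcE A B :=
        fun hc => srcE_ne_neg A B t u htu hc.symm
      have hsum2 := hsum u
      rw [sum_eq_on_small d u _ hF, Finset.sum_pair hnesrc, root_neg_right, hsrcl, root_loope,
        if_pos hua] at hsum2
      rw [hsrcl]
      linarith [hsum2]
    · -- u is the top of A but not of B; then u is the merge point, B continues upward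
      obtain ⟨wB, hcwB⟩ := exists_succ huB hub
      have huwB : u < wB := hcwB.2.2.1
      have hucm : u = topV (A ∩ B) := le_antisymm hle (by rw [hua]; exact le_topV hcA)
      have hwBgt : topV (A ∩ B) < wB := by rw [← hucm]; exact huwB
      have hside : d (neg u wB huwB) = d (srcE A B) :=
        side_prop_B hval hd0 hsum wB hcwB.2.1 hwBgt u huwB hcwB
      have hF : ∀ e ∉ ({neg t u htu, neg u wB huwB, srcE A B} : Finset (EdgeC n)),
          d e * rootC n e u = 0 := by
        intro e heF
        by_contra hne0
        rcases supp_root_cases hd0 u e hne0 with ⟨t', ht', rfl, hc'⟩ | ⟨w', hw', rfl, hc'⟩ |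
          ⟨rfl, -⟩
        · have : t' = t := by
            rcases hc' with hc' | hc'
            · exact consec_pred_unique hc' hcons
            · exact consec_pred_unique hc' hconsB
          subst this
          exact heF (Finset.mem_insert_self _ _)
        · rcases hc' with hc' | hc'
          · exact absurd (lt_of_lt_of_le hw' (le_topV hc'.2.1))
              (by rw [hua]; exact lt_irrefl _)
          · have : w' = wB := consec_succ_unique hc' hcwB
            subst this
            exact heF (Finset.mem_insert_of_mem (Finset.mem_insert_self _ _))
        · exact heF (Finset.mem_insert_of_mem (Finset.mem_insert_of_mem
            (Finset.mem_singleton_self _)))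
      have hd12 : (neg t u htu : EdgeC n) ≠ neg u wB huwB :=
        neg_ne_neg_of (Or.inl (ne_of_lt htu))
      have hd13 : (neg t u htu : EdgeC n) ≠ srcE A B :=
        fun hc => srcE_ne_neg A B t u htu hc.symm
      have hd23 : (neg u wB huwB : EdgeC n) ≠ srcE A B :=
        fun hc => srcE_ne_neg A B u wB huwB hc.symm
      have hsum2 := hsum u
      rw [sum_eq_on_small d u _ hF, Finset.sum_insert (by
          simp only [Finset.mem_insert, Finset.mem_singleton]
          push_neg
          exact ⟨hd12, hd13⟩), Finset.sum_pair hd23, root_neg_right, root_neg_left,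
        root_srcE, if_pos hua, if_neg hub] at hsum2
      linarith [hsum2, hside]
  · by_cases hub : u = topV B
    · -- u is the top of B but not of A
      obtain ⟨wA, hcwA⟩ := exists_succ hu hua
      have huwA : u < wA := hcwA.2.2.1
      have hucm : u = topV (A ∩ B) := le_antisymm hle (by rw [hub]; exact le_topV hcB)
      have hwAgt : topV (A ∩ B) < wA := by rw [← hucm]; exact huwA
      have hside : d (neg u wA huwA) = d (srcE A B) :=
        side_prop hval hd0 hsum wA hcwA.2.1 hwAgt u huwA hcwA
      have hF : ∀ e ∉ ({neg t u htu, neg u wA huwA, srcE A B} : Finset (EdgeC n)),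
          d e * rootC n e u = 0 := by
        intro e heF
        by_contra hne0
        rcases supp_root_cases hd0 u e hne0 with ⟨t', ht', rfl, hc'⟩ | ⟨w', hw', rfl, hc'⟩ |
          ⟨rfl, -⟩
        · have : t' = t := by
            rcases hc' with hc' | hc'
            · exact consec_pred_unique hc' hcons
            · exact consec_pred_unique hc' hconsB
          subst this
          exact heF (Finset.mem_insert_self _ _)
        · rcases hc' with hc' | hc'
          · have : w' = wA := consec_succ_unique hc' hcwA
            subst this
            exact heF (Finset.mem_insert_of_mem (Finset.mem_insert_self _ _))
          · exact absurd (lt_of_lt_of_le hw' (le_topV hc'.2.1))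
              (by rw [hub]; exact lt_irrefl _)
        · exact heF (Finset.mem_insert_of_mem (Finset.mem_insert_of_mem
            (Finset.mem_singleton_self _)))
      have hd12 : (neg t u htu : EdgeC n) ≠ neg u wA huwA :=
        neg_ne_neg_of (Or.inl (ne_of_lt htu))
      have hd13 : (neg t u htu : EdgeC n) ≠ srcE A B :=
        fun hc => srcE_ne_neg A B t u htu hc.symm
      have hd23 : (neg u wA huwA : EdgeC n) ≠ srcE A B :=
        fun hc => srcE_ne_neg A B u wA huwA hc.symm
      have hsum2 := hsum u
      rw [sum_eq_on_small d u _ hF, Finset.sum_insert (by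
          simp only [Finset.mem_insert, Finset.mem_singleton]
          push_neg
          exact ⟨hd12, hd13⟩), Finset.sum_pair hd23, root_neg_right, root_neg_left,
        root_srcE, if_neg hua, if_pos hub] at hsum2
      linarith [hsum2, hside]
    · -- u is the top of neither chain
      rcases lt_or_eq_of_le hle with hlt | heq
      · -- strictly below the merge point: a single shared up edge, in the merged region
        obtain ⟨wA, hcwA⟩ := exists_succ hu hua
        have huwA : u < wA := hcwA.2.2.1
        have hwAle : wA ≤ topV (A ∩ B) := by
          rcases hcwA.2.2.2 (topV (A ∩ B)) hcA with h | h
          · exact absurd hlt (not_lt.2 h)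
          · exact h
        have hconsBup : consec B u wA := consec_merged hval hwAle hcwA
        have hIH : d (neg u wA huwA) = 2 * d (srcE A B) :=
          IH wA huwA hcwA.2.1 hwAle (ne_of_gt (lt_of_le_of_lt (Fin.zero_le u) huwA)) u
            huwA hcwA
        have hF : ∀ e ∉ ({neg t u htu, neg u wA huwA} : Finset (EdgeC n)),
            d e * rootC n e u = 0 := by
          intro e heF
          by_contra hne0
          rcases supp_root_cases hd0 u e hne0 with ⟨t', ht', rfl, hc'⟩ | ⟨w', hw', rfl, hc'⟩ |
            ⟨rfl, hroot⟩
          · have : t' = t := by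
              rcases hc' with hc' | hc'
              · exact consec_pred_unique hc' hcons
              · exact consec_pred_unique hc' hconsB
            subst this
            exact heF (Finset.mem_insert_self _ _)
          · have : w' = wA := by
              rcases hc' with hc' | hc'
              · exact consec_succ_unique hc' hcwA
              · exact consec_succ_unique hc' hconsBup
            subst this
            exact heF (Finset.mem_insert_of_mem (Finset.mem_singleton_self _))
          · exact hroot (root_srcE_of_ne hua hub)
        have hd12 : (neg t u htu : EdgeC n) ≠ neg u wA huwA :=
          neg_ne_neg_of (Or.inl (ne_of_lt htu))
        have hsum2 := hsum u
        rw [sum_eq_on_small d u _ hF, Finset.sum_pair hd12, root_neg_right,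
          root_neg_left] at hsum2
        linarith [hsum2, hIH]
      · -- u is the merge point, both chains continue upward separately
        obtain ⟨wA, hcwA⟩ := exists_succ hu hua
        obtain ⟨wB, hcwB⟩ := exists_succ huB hub
        have huwA : u < wA := hcwA.2.2.1
        have huwB : u < wB := hcwB.2.2.1
        have hwAgt : topV (A ∩ B) < wA := by rw [← heq]; exact huwA
        have hwBgt : topV (A ∩ B) < wB := by rw [← heq]; exact huwB
        have hsideA : d (neg u wA huwA) = d (srcE A B) :=
          side_prop hval hd0 hsum wA hcwA.2.1 hwAgt u huwA hcwA
        have hsideB : d (neg u wB huwB) = d (srcE A B) :=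
          side_prop_B hval hd0 hsum wB hcwB.2.1 hwBgt u huwB hcwB
        have hwAB : wA ≠ wB := by
          intro hcc
          exact (not_mem_B_of_gt hval hcwA.2.1 hwAgt) (hcc ▸ hcwB.2.1)
        have hF : ∀ e ∉ ({neg t u htu, neg u wA huwA, neg u wB huwB} : Finset (EdgeC n)),
            d e * rootC n e u = 0 := by
          intro e heF
          by_contra hne0
          rcases supp_root_cases hd0 u e hne0 with ⟨t', ht', rfl, hc'⟩ | ⟨w', hw', rfl, hc'⟩ |
            ⟨rfl, hroot⟩
          · have : t' = t := by
              rcases hc' with hc' | hc'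
              · exact consec_pred_unique hc' hcons
              · exact consec_pred_unique hc' hconsB
            subst this
            exact heF (Finset.mem_insert_self _ _)
          · rcases hc' with hc' | hc'
            · have : w' = wA := consec_succ_unique hc' hcwA
              subst this
              exact heF (Finset.mem_insert_of_mem (Finset.mem_insert_self _ _))
            · have : w' = wB := consec_succ_unique hc' hcwB
              subst this
              exact heF (Finset.mem_insert_of_mem (Finset.mem_insert_of_mem
                (Finset.mem_singleton_self _)))
          · exact hroot (root_srcE_of_ne hua hub)
        have hd12 : (neg t u htu : EdgeC n) ≠ neg u wA huwA :=
          neg_ne_neg_of (Or.inl (ne_of_lt htu))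
        have hd13 : (neg t u htu : EdgeC n) ≠ neg u wB huwB :=
          neg_ne_neg_of (Or.inl (ne_of_lt htu))
        have hd23 : (neg u wA huwA : EdgeC n) ≠ neg u wB huwB :=
          neg_ne_neg_of (Or.inr hwAB)
        have hsum2 := hsum u
        rw [sum_eq_on_small d u _ hF, Finset.sum_insert (by
            simp only [Finset.mem_insert, Finset.mem_singleton]
            push_neg
            exact ⟨hd12, hd13⟩), Finset.sum_pair hd23, root_neg_right, root_neg_left,
          root_neg_left] at hsum2
        linarith [hsum2, hsideA, hsideB]

end Uniqueness2

section Uniqueness3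

variable {A B : Finset (Fin (n+1))} {d : EdgeC n → ℝ}

/-- Claim 3: looking at the equation at vertex `0`, the source value of `d` vanishes. -/
lemma src_zero (hval : Valid A B) (hd0 : ∀ e, vflow A B e = 0 → d e = 0)
    (hsum : ∀ k, ∑ e, d e * rootC n e k = 0) : d (srcE A B) = 0 := by
  have h0AB : 0 ∈ A ∩ B := Finset.mem_inter.2 ⟨hval.1, hval.2.1⟩
  have hcA : topV (A ∩ B) ∈ A := (Finset.mem_inter.1 (topV_mem ⟨0, h0AB⟩)).1
  have hcB : topV (A ∩ B) ∈ B := (Finset.mem_inter.1 (topV_mem ⟨0, h0AB⟩)).2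
  have hnotin : ∀ (t' : Fin (n+1)), ¬ (t' < (0 : Fin (n+1))) :=
    fun t' => not_lt.2 (Fin.zero_le t')
  by_cases hua : (0 : Fin (n+1)) = topV A
  · by_cases hub : (0 : Fin (n+1)) = topV B
    · -- both chains are {0}: the source is the loop at 0
      have htopeq : topV A = topV B := by rw [← hua, ← hub]
      have hsrcl : srcE A B = loope (topV A) := by unfold srcE; rw [dif_pos htopeq]
      have hF : ∀ e ∉ ({srcE A B} : Finset (EdgeC n)), d e * rootC n e 0 = 0 := by
        intro e heF
        by_contra hne0
        rcases supp_root_cases hd0 0 e hne0 with ⟨t', ht', -, -⟩ | ⟨w', hw', rfl, hc'⟩ |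
          ⟨rfl, -⟩
        · exact hnotin t' ht'
        · rcases hc' with hc' | hc'
          · exact absurd (lt_of_lt_of_le hw' (le_topV hc'.2.1))
              (by rw [← hua]; exact hnotin _)
          · exact absurd (lt_of_lt_of_le hw' (le_topV hc'.2.1))
              (by rw [← hub]; exact hnotin _)
        · exact heF (Finset.mem_singleton_self _)
      have hsum2 := hsum 0
      rw [sum_eq_on_small d 0 _ hF, Finset.sum_singleton, hsrcl, root_loope,
        if_pos hua] at hsum2
      rw [hsrcl]
      linarith [hsum2]
    · -- A = {0}; B goes up
      obtain ⟨wB, hcwB⟩ := exists_succ hval.2.1 hub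
      have huwB : (0 : Fin (n+1)) < wB := hcwB.2.2.1
      have hc0 : topV (A ∩ B) = 0 :=
        le_antisymm (by rw [hua]; exact le_topV hcA) (Fin.zero_le _)
      have hwBgt : topV (A ∩ B) < wB := by rw [hc0]; exact huwB
      have hside : d (neg 0 wB huwB) = d (srcE A B) :=
        side_prop_B hval hd0 hsum wB hcwB.2.1 hwBgt 0 huwB hcwB
      have hF : ∀ e ∉ ({neg 0 wB huwB, srcE A B} : Finset (EdgeC n)),
          d e * rootC n e 0 = 0 := by
        intro e heF
        by_contra hne0
        rcases supp_root_cases hd0 0 e hne0 with ⟨t', ht', -, -⟩ | ⟨w', hw', rfl, hc'⟩ |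
          ⟨rfl, -⟩
        · exact hnotin t' ht'
        · rcases hc' with hc' | hc'
          · exact absurd (lt_of_lt_of_le hw' (le_topV hc'.2.1))
              (by rw [← hua]; exact hnotin _)
          · have : w' = wB := consec_succ_unique hc' hcwB
            subst this
            exact heF (Finset.mem_insert_self _ _)
        · exact heF (Finset.mem_insert_of_mem (Finset.mem_singleton_self _))
      have hd23 : (neg 0 wB huwB : EdgeC n) ≠ srcE A B :=
        fun hc => srcE_ne_neg A B 0 wB huwB hc.symm
      have hsum2 := hsum 0
      rw [sum_eq_on_small d 0 _ hF, Finset.sum_pair hd23, root_neg_left,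
        root_srcE, if_pos hua, if_neg hub] at hsum2
      linarith [hsum2, hside]
  · by_cases hub : (0 : Fin (n+1)) = topV B
    · -- B = {0}; A goes up
      obtain ⟨wA, hcwA⟩ := exists_succ hval.1 hua
      have huwA : (0 : Fin (n+1)) < wA := hcwA.2.2.1
      have hc0 : topV (A ∩ B) = 0 :=
        le_antisymm (by rw [hub]; exact le_topV hcB) (Fin.zero_le _)
      have hwAgt : topV (A ∩ B) < wA := by rw [hc0]; exact huwA
      have hside : d (neg 0 wA huwA) = d (srcE A B) :=
        side_prop hval hd0 hsum wA hcwA.2.1 hwAgt 0 huwA hcwA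
      have hF : ∀ e ∉ ({neg 0 wA huwA, srcE A B} : Finset (EdgeC n)),
          d e * rootC n e 0 = 0 := by
        intro e heF
        by_contra hne0
        rcases supp_root_cases hd0 0 e hne0 with ⟨t', ht', -, -⟩ | ⟨w', hw', rfl, hc'⟩ |
          ⟨rfl, -⟩
        · exact hnotin t' ht'
        · rcases hc' with hc' | hc'
          · have : w' = wA := consec_succ_unique hc' hcwA
            subst this
            exact heF (Finset.mem_insert_self _ _)
          · exact absurd (lt_of_lt_of_le hw' (le_topV hc'.2.1))
              (by rw [← hub]; exact hnotin _)
        · exact heF (Finset.mem_insert_of_mem (Finset.mem_singleton_self _))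
      have hd23 : (neg 0 wA huwA : EdgeC n) ≠ srcE A B :=
        fun hc => srcE_ne_neg A B 0 wA huwA hc.symm
      have hsum2 := hsum 0
      rw [sum_eq_on_small d 0 _ hF, Finset.sum_pair hd23, root_neg_left,
        root_srcE, if_neg hua, if_pos hub] at hsum2
      linarith [hsum2, hside]
    · -- both chains go up
      obtain ⟨wA, hcwA⟩ := exists_succ hval.1 hua
      obtain ⟨wB, hcwB⟩ := exists_succ hval.2.1 hub
      have huwA : (0 : Fin (n+1)) < wA := hcwA.2.2.1
      have huwB : (0 : Fin (n+1)) < wB := hcwB.2.2.1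
      by_cases hc0 : topV (A ∩ B) = 0
      · -- merge at 0: the two chains are disjoint above 0
        have hwAgt : topV (A ∩ B) < wA := by rw [hc0]; exact huwA
        have hwBgt : topV (A ∩ B) < wB := by rw [hc0]; exact huwB
        have hsideA : d (neg 0 wA huwA) = d (srcE A B) :=
          side_prop hval hd0 hsum wA hcwA.2.1 hwAgt 0 huwA hcwA
        have hsideB : d (neg 0 wB huwB) = d (srcE A B) :=
          side_prop_B hval hd0 hsum wB hcwB.2.1 hwBgt 0 huwB hcwB
        have hwAB : wA ≠ wB := by
          intro hcc
          exact (not_mem_B_of_gt hval hcwA.2.1 hwAgt) (hcc ▸ hcwB.2.1)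
        have hF : ∀ e ∉ ({neg 0 wA huwA, neg 0 wB huwB} : Finset (EdgeC n)),
            d e * rootC n e 0 = 0 := by
          intro e heF
          by_contra hne0
          rcases supp_root_cases hd0 0 e hne0 with ⟨t', ht', -, -⟩ | ⟨w', hw', rfl, hc'⟩ |
            ⟨rfl, hroot⟩
          · exact hnotin t' ht'
          · rcases hc' with hc' | hc'
            · have : w' = wA := consec_succ_unique hc' hcwA
              subst this
              exact heF (Finset.mem_insert_self _ _)
            · have : w' = wB := consec_succ_unique hc' hcwB
              subst this
              exact heF (Finset.mem_insert_of_mem (Finset.mem_singleton_self _))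
          · exact hroot (root_srcE_of_ne hua hub)
        have hd12 : (neg 0 wA huwA : EdgeC n) ≠ neg 0 wB huwB :=
          neg_ne_neg_of (Or.inr hwAB)
        have hsum2 := hsum 0
        rw [sum_eq_on_small d 0 _ hF, Finset.sum_pair hd12, root_neg_left,
          root_neg_left] at hsum2
        linarith [hsum2, hsideA, hsideB]
      · -- merge point above 0: a single shared up edge in the merged region
        have hcpos : (0 : Fin (n+1)) < topV (A ∩ B) :=
          lt_of_le_of_ne (Fin.zero_le _) (Ne.symm hc0)
        have hwAle : wA ≤ topV (A ∩ B) := by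
          rcases hcwA.2.2.2 (topV (A ∩ B)) hcA with h | h
          · exact absurd hcpos (not_lt.2 h)
          · exact h
        have hconsBup : consec B 0 wA := consec_merged hval hwAle hcwA
        have hval2 : d (neg 0 wA huwA) = 2 * d (srcE A B) :=
          merged_prop hval hd0 hsum wA hcwA.2.1 hwAle (ne_of_gt huwA) 0 huwA hcwA
        have hF : ∀ e ∉ ({neg 0 wA huwA} : Finset (EdgeC n)), d e * rootC n e 0 = 0 := by
          intro e heF
          by_contra hne0
          rcases supp_root_cases hd0 0 e hne0 with ⟨t', ht', -, -⟩ | ⟨w', hw', rfl, hc'⟩ |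
            ⟨rfl, hroot⟩
          · exact hnotin t' ht'
          · have : w' = wA := by
              rcases hc' with hc' | hc'
              · exact consec_succ_unique hc' hcwA
              · exact consec_succ_unique hc' hconsBup
            subst this
            exact heF (Finset.mem_singleton_self _)
          · exact hroot (root_srcE_of_ne hua hub)
        have hsum2 := hsum 0
        rw [sum_eq_on_small d 0 _ hF, Finset.sum_singleton, root_neg_left] at hsum2
        linarith [hsum2, hval2]

/-- Uniqueness: any element of the polytope supported inside a candidate support
equals that candidate. -/
lemma vflow_unique (hval : Valid A B) {y : EdgeC n → ℝ} (hy : y ∈ CRYC n)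
    (hsupp : ∀ e, vflow A B e = 0 → y e = 0) : y = vflow A B := by
  have hvm : vflow A B ∈ CRYC n := vflow_mem_CRYC A B hval.1 hval.2.1
  set d := fun e => y e - vflow A B e with hd
  have hd0 : ∀ e, vflow A B e = 0 → d e = 0 := by
    intro e he
    rw [hd]
    dsimp only
    rw [he, hsupp e he]
    ring
  have hsum : ∀ k, ∑ e, d e * rootC n e k = 0 := by
    intro k
    have hterm : ∀ e : EdgeC n, d e * rootC n e k =
        y e * rootC n e k - vflow A B e * rootC n e k := fun e => by rw [hd]; ring
    rw [Finset.sum_congr rfl fun e _ => hterm e, Finset.sum_sub_distrib,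
      (mem_CRYC_iff.1 hy).2 k, (mem_CRYC_iff.1 hvm).2 k]
    ring
  have hs0 : d (srcE A B) = 0 := src_zero hval hd0 hsum
  have hall : ∀ e, d e = 0 := by
    intro e
    by_cases hv : vflow A B e = 0
    · exact hd0 e hv
    · rcases vflow_ne_zero hv with ⟨i, j, hij, rfl, hc | hc⟩ | rfl
      · by_cases hcj : topV (A ∩ B) < j
        · rw [side_prop hval hd0 hsum j hc.2.1 hcj i hij hc, hs0]
        · push_neg at hcj
          rw [merged_prop hval hd0 hsum j hc.2.1 hcj
            (ne_of_gt (lt_of_le_of_lt (Fin.zero_le i) hij)) i hij hc, hs0]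
          ring
      · by_cases hcj : topV (A ∩ B) < j
        · rw [side_prop_B hval hd0 hsum j hc.2.1 hcj i hij hc, hs0]
        · push_neg at hcj
          have hd0' : ∀ e, vflow B A e = 0 → d e = 0 := by rw [vflow_comm B A]; exact hd0
          have := merged_prop hval.comm hd0' hsum j hc.2.1
            (by rwa [Finset.inter_comm B A]) (ne_of_gt (lt_of_le_of_lt (Fin.zero_le i) hij))
            i hij hc
          rw [this, srcE_comm B A, hs0]
          ring
      · exact hs0
  funext e
  have := hall e
  rw [hd] at this
  dsimp only at this
  linarith [this]

/-- every candidate flow is an extreme point -/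
lemma vflow_extreme (hval : Valid A B) : vflow A B ∈ (CRYC n).extremePoints ℝ := by
  refine ⟨vflow_mem_CRYC A B hval.1 hval.2.1, ?_⟩
  intro x₁ hx₁ x₂ hx₂ hseg
  obtain ⟨a, b, ha, hb, hab, hcomb⟩ := hseg
  have hx₁n := (mem_CRYC_iff.1 hx₁).1
  have hx₂n := (mem_CRYC_iff.1 hx₂).1
  have h1 : x₁ = vflow A B := by
    refine vflow_unique hval hx₁ fun e he => ?_
    have hc := congrFun hcomb e
    simp only [Pi.add_apply, Pi.smul_apply, smul_eq_mul] at hc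
    rw [he] at hc
    nlinarith [hx₁n e, hx₂n e, hc, ha, hb]
  have h2 : x₂ = vflow A B := by
    refine vflow_unique hval hx₂ fun e he => ?_
    have hc := congrFun hcomb e
    simp only [Pi.add_apply, Pi.smul_apply, smul_eq_mul] at hc
    rw [he] at hc
    nlinarith [hx₁n e, hx₂n e, hc, ha, hb]
  exact h1

end Uniqueness3

section Decode

/-- the first chain encoded by `h` : vertex `0` together with the `1`-labelled vertices -/
def oneSet (h : Fin n → Fin 3) : Finset (Fin (n+1)) :=
  insert 0 ((Finset.univ.filter (fun v => h v = 1)).image Fin.succ)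

/-- the `2`-labelled vertices -/
def twoSet (h : Fin n → Fin 3) : Finset (Fin (n+1)) :=
  (Finset.univ.filter (fun v => h v = 2)).image Fin.succ

/-- the second chain encoded by `h` -/
def Bset (h : Fin n → Fin 3) : Finset (Fin (n+1)) :=
  if htw : (twoSet h).Nonempty then
    insert 0 (((oneSet h).filter (fun v => v < (twoSet h).min' htw)) ∪ twoSet h)
  else oneSet h

variable {h : Fin n → Fin 3}

lemma zero_mem_oneSet : (0 : Fin (n+1)) ∈ oneSet h := Finset.mem_insert_self _ _

lemma zero_mem_Bset : (0 : Fin (n+1)) ∈ Bset h := by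
  unfold Bset
  split_ifs
  · exact Finset.mem_insert_self _ _
  · exact zero_mem_oneSet

lemma mem_oneSet {v : Fin n} : v.succ ∈ oneSet h ↔ h v = 1 := by
  unfold oneSet
  rw [Finset.mem_insert]
  constructor
  · rintro (hc | hc)
    · exact absurd hc (Fin.succ_ne_zero v)
    · obtain ⟨w, hw, hws⟩ := Finset.mem_image.1 hc
      have : w = v := by
        have := Fin.succ_injective _ hws
        exact this
      subst this
      exact (Finset.mem_filter.1 hw).2
  · intro hv
    exact Or.inr (Finset.mem_image.2 ⟨v, Finset.mem_filter.2 ⟨Finset.mem_univ _, hv⟩, rfl⟩)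

lemma mem_twoSet {v : Fin n} : v.succ ∈ twoSet h ↔ h v = 2 := by
  unfold twoSet
  rw [Finset.mem_image]
  constructor
  · rintro ⟨w, hw, hws⟩
    have : w = v := Fin.succ_injective _ hws
    subst this
    exact (Finset.mem_filter.1 hw).2
  · intro hv
    exact ⟨v, Finset.mem_filter.2 ⟨Finset.mem_univ _, hv⟩, rfl⟩

lemma zero_not_mem_twoSet : (0 : Fin (n+1)) ∉ twoSet h := by
  unfold twoSet
  rw [Finset.mem_image]
  rintro ⟨w, -, hw⟩
  exact Fin.succ_ne_zero w hw

lemma oneSet_twoSet_disjoint {u : Fin (n+1)} (h1 : u ∈ oneSet h) (h2 : u ∈ twoSet h) :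
    False := by
  rcases Fin.eq_zero_or_eq_succ u with rfl | ⟨v, rfl⟩
  · exact zero_not_mem_twoSet h2
  · rw [mem_oneSet] at h1
    rw [mem_twoSet] at h2
    rw [h1] at h2
    exact absurd h2 (by decide)

lemma mem_inter_oneSet_Bset {u : Fin (n+1)} (htw : (twoSet h).Nonempty) :
    u ∈ oneSet h ∩ Bset h ↔ u ∈ oneSet h ∧ (u = 0 ∨ u < (twoSet h).min' htw) := by
  unfold Bset
  rw [dif_pos htw, Finset.mem_inter]
  constructor
  · rintro ⟨hA, hB⟩
    refine ⟨hA, ?_⟩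
    rcases Finset.mem_insert.1 hB with rfl | hB'
    · exact Or.inl rfl
    · rcases Finset.mem_union.1 hB' with hc | hc
      · exact Or.inr (Finset.mem_filter.1 hc).2
      · exact absurd (oneSet_twoSet_disjoint hA hc) id
  · rintro ⟨hA, rfl | hlt⟩
    · exact ⟨hA, Finset.mem_insert_self _ _⟩
    · exact ⟨hA, Finset.mem_insert_of_mem (Finset.mem_union_left _
        (Finset.mem_filter.2 ⟨hA, hlt⟩))⟩

lemma Bset_diff_oneSet : Bset h \ oneSet h = twoSet h := by
  ext u
  rw [Finset.mem_sdiff]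
  unfold Bset
  split_ifs with htw
  · constructor
    · rintro ⟨hB, hA⟩
      rcases Finset.mem_insert.1 hB with rfl | hB'
      · exact absurd zero_mem_oneSet hA
      · rcases Finset.mem_union.1 hB' with hc | hc
        · exact absurd (Finset.mem_filter.1 hc).1 hA
        · exact hc
    · intro hu
      refine ⟨Finset.mem_insert_of_mem (Finset.mem_union_right _ hu),
        fun hA => oneSet_twoSet_disjoint hA hu⟩
  · rw [Finset.not_nonempty_iff_eq_empty] at htw
    constructor
    · rintro ⟨hB, hA⟩
      exact absurd hB hA
    · intro hu
      rw [htw] at hu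
      exact absurd hu (Finset.notMem_empty u)

lemma mem_Bset_cases {u : Fin (n+1)} (hu : u ∈ Bset h) : u ∈ oneSet h ∨ u ∈ twoSet h := by
  by_cases hA : u ∈ oneSet h
  · exact Or.inl hA
  · exact Or.inr (Bset_diff_oneSet ▸ Finset.mem_sdiff.2 ⟨hu, hA⟩)

lemma valid_dec (h : Fin n → Fin 3) : Valid (oneSet h) (Bset h) := by
  refine ⟨zero_mem_oneSet, zero_mem_Bset, ?_⟩
  intro u hu w hw hle
  by_cases htw : (twoSet h).Nonempty
  · set s := (twoSet h).min' htw with hs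
    have hw' := (mem_inter_oneSet_Bset htw).1 hw
    have hus : u = 0 ∨ u < s := by
      rcases hw'.2 with rfl | hws
      · exact Or.inl (le_antisymm hle (Fin.zero_le u))
      · exact Or.inr (lt_of_le_of_lt hle hws)
    have huA : u ∈ oneSet h := by
      rcases Finset.mem_union.1 hu with hc | hc
      · exact hc
      · rcases Finset.mem_insert.1 (by
            unfold Bset at hc
            rwa [dif_pos htw] at hc) with rfl | hc'
        · exact zero_mem_oneSet
        · rcases Finset.mem_union.1 hc' with hc'' | hc''
          · exact (Finset.mem_filter.1 hc'').1
          · -- u ∈ twoSet: impossible since u = 0 or u < s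
            exfalso
            rcases hus with rfl | hus'
            · exact zero_not_mem_twoSet hc''
            · exact absurd (Finset.min'_le _ u hc'') (not_le.2 hus')
    exact (mem_inter_oneSet_Bset htw).2 ⟨huA, hus⟩
  · have hBA : Bset h = oneSet h := by unfold Bset; rw [dif_neg htw]
    rw [hBA] at hu ⊢
    rw [Finset.union_self] at hu
    exact Finset.mem_inter.2 ⟨hu, hu⟩

/-- the decoding map from ternary words to candidate flows -/
noncomputable def dec (h : Fin n → Fin 3) : EdgeC n → ℝ := vflow (oneSet h) (Bset h)

end Decode

section Encode

lemma encode_aux {A B : Finset (Fin (n+1))} (hval : Valid A B) (m : Fin (n+1)) (hmB : m ∈ B)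
    (hmA : m ∉ A) (hmlb : ∀ u ∈ A ∪ B, u ∉ A ∩ B → m ≤ u) :
    ∃ h : Fin n → Fin 3, vflow (oneSet h) (Bset h) = vflow A B := by
  classical
  set h : Fin n → Fin 3 :=
    fun v => if v.succ ∈ B ∧ v.succ ∉ A then 2 else if v.succ ∈ A then 1 else 0 with hh
  have hone : oneSet h = A := by
    ext u
    rcases Fin.eq_zero_or_eq_succ u with rfl | ⟨v, rfl⟩
    · constructor
      · intro _; exact hval.1
      · intro _; exact zero_mem_oneSet
    · rw [mem_oneSet, hh]
      dsimp only
      by_cases h2 : v.succ ∈ B ∧ v.succ ∉ A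
      · rw [if_pos h2]
        constructor
        · intro habs; exact absurd habs (by decide)
        · intro hA; exact absurd hA h2.2
      · rw [if_neg h2]
        by_cases hA : v.succ ∈ A
        · rw [if_pos hA]
          exact ⟨fun _ => hA, fun _ => rfl⟩
        · rw [if_neg hA]
          exact ⟨fun habs => absurd habs (by decide), fun hA' => absurd hA' hA⟩
  have htwo : twoSet h = B \ A := by
    ext u
    rcases Fin.eq_zero_or_eq_succ u with rfl | ⟨v, rfl⟩
    · constructor
      · intro hc; exact absurd hc zero_not_mem_twoSet
      · intro hc; exact absurd (Finset.mem_sdiff.1 hc).2 (by intro hcc; exact hcc hval.1)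
    · rw [mem_twoSet, hh, Finset.mem_sdiff]
      dsimp only
      by_cases h2 : v.succ ∈ B ∧ v.succ ∉ A
      · rw [if_pos h2]
        exact ⟨fun _ => h2, fun _ => rfl⟩
      · rw [if_neg h2]
        by_cases hA : v.succ ∈ A
        · rw [if_pos hA]
          exact ⟨fun habs => absurd habs (by decide), fun hc => absurd hc h2⟩
        · rw [if_neg hA]
          exact ⟨fun habs => absurd habs (by decide), fun hc => absurd hc h2⟩
  have hmBA : m ∈ B \ A := Finset.mem_sdiff.2 ⟨hmB, hmA⟩
  have htwne : (twoSet h).Nonempty := ⟨m, htwo ▸ hmBA⟩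
  have hmin : (twoSet h).min' htwne = m := by
    apply le_antisymm
    · exact Finset.min'_le _ m (htwo ▸ hmBA)
    · have hmem := (twoSet h).min'_mem htwne
      have hmem' : (twoSet h).min' htwne ∈ B \ A := by rw [← htwo]; exact hmem
      rw [Finset.mem_sdiff] at hmem'
      exact hmlb _ (Finset.mem_union_right _ hmem'.1)
        (fun hc => hmem'.2 (Finset.mem_inter.1 hc).1)
  have hBset : Bset h = B := by
    unfold Bset
    rw [dif_pos htwne, hone]
    have hfilter : Finset.filter (fun v => v < (twoSet h).min' htwne) A
        = Finset.filter (fun v => v < m) A := by rw [hmin]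
    rw [hfilter, htwo]
    ext u
    rw [Finset.mem_insert, Finset.mem_union, Finset.mem_filter, Finset.mem_sdiff]
    constructor
    · rintro (rfl | (⟨huA, hum⟩ | ⟨huB, -⟩))
      · exact hval.2.1
      · by_contra huB
        have hmem : u ∈ (A ∪ B) ∧ u ∉ A ∩ B :=
          ⟨Finset.mem_union_left _ huA, fun hc => huB (Finset.mem_inter.1 hc).2⟩
        exact absurd (hmlb u hmem.1 hmem.2) (not_le.2 hum)
      · exact huB
    · intro huB
      by_cases huA : u ∈ A
      · by_cases hu0 : u = 0
        · exact Or.inl hu0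
        · refine Or.inr (Or.inl ⟨huA, ?_⟩)
          by_contra hum
          push_neg at hum
          have : m ∈ A ∩ B := hval.2.2 m (Finset.mem_union_right _ hmB) u
            (Finset.mem_inter.2 ⟨huA, huB⟩) hum
          exact hmA (Finset.mem_inter.1 this).1
      · exact Or.inr (Or.inr ⟨huB, huA⟩)
  exact ⟨h, by rw [hone, hBset]⟩

lemma encode {A B : Finset (Fin (n+1))} (hval : Valid A B) :
    ∃ h : Fin n → Fin 3, vflow (oneSet h) (Bset h) = vflow A B := by
  classical
  by_cases hne : A = B
  · subst hne
    set h : Fin n → Fin 3 := fun v => if v.succ ∈ A then 1 else 0 with hh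
    have hone : oneSet h = A := by
      ext u
      rcases Fin.eq_zero_or_eq_succ u with rfl | ⟨v, rfl⟩
      · exact ⟨fun _ => hval.1, fun _ => zero_mem_oneSet⟩
      · rw [mem_oneSet, hh]
        dsimp only
        by_cases hA : v.succ ∈ A
        · rw [if_pos hA]
          exact ⟨fun _ => hA, fun _ => rfl⟩
        · rw [if_neg hA]
          exact ⟨fun habs => absurd habs (by decide), fun hA' => absurd hA' hA⟩
    have htw : twoSet h = ∅ := by
      ext u
      simp only [Finset.notMem_empty, iff_false]
      rcases Fin.eq_zero_or_eq_succ u with rfl | ⟨v, rfl⟩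
      · exact zero_not_mem_twoSet
      · rw [mem_twoSet, hh]
        dsimp only
        split_ifs <;> decide
    have hBset : Bset h = oneSet h := by
      unfold Bset
      rw [dif_neg (by rw [htw]; exact Finset.not_nonempty_empty)]
    exact ⟨h, by rw [hone, hBset, hone]⟩
  · have hΔne : ((A ∪ B) \ (A ∩ B)).Nonempty := by
      by_contra hc
      rw [Finset.not_nonempty_iff_eq_empty, Finset.sdiff_eq_empty_iff_subset] at hc
      refine hne (Finset.Subset.antisymm ?_ ?_)
      · intro a ha
        exact (Finset.mem_inter.1 (hc (Finset.mem_union_left _ ha))).2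
      · intro a ha
        exact (Finset.mem_inter.1 (hc (Finset.mem_union_right _ ha))).1
    set m := ((A ∪ B) \ (A ∩ B)).min' hΔne with hm
    have hmΔ := Finset.mem_sdiff.1 (Finset.min'_mem _ hΔne)
    have hmlb : ∀ u ∈ A ∪ B, u ∉ A ∩ B → m ≤ u :=
      fun u hu hni => Finset.min'_le _ u (Finset.mem_sdiff.2 ⟨hu, hni⟩)
    rcases Finset.mem_union.1 hmΔ.1 with hmA | hmB
    · -- m ∈ A \ B : apply the auxiliary lemma with the roles swapped
      have hmB' : m ∉ B := fun hc => hmΔ.2 (Finset.mem_inter.2 ⟨hmA, hc⟩)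
      have hmlb' : ∀ u ∈ B ∪ A, u ∉ B ∩ A → m ≤ u := fun u hu hni =>
        hmlb u (by rwa [Finset.union_comm]) (by rwa [Finset.inter_comm])
      obtain ⟨h, hfl⟩ := encode_aux hval.comm m hmA hmB' hmlb'
      exact ⟨h, by rw [hfl, vflow_comm]⟩
    · have hmA' : m ∉ A := fun hc => hmΔ.2 (Finset.mem_inter.2 ⟨hc, hmB⟩)
      exact encode_aux hval m hmB hmA' hmlb

end Encode

section Injectivity

lemma up_induction {Q : Fin (n+1) → Prop} (H : ∀ u, (∀ w, w < u → Q w) → Q u) : ∀ u, Q u := by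
  have key : ∀ m : ℕ, ∀ u : Fin (n+1), u.val < m → Q u := by
    intro m
    induction m with
    | zero => intro u hu; omega
    | succ m ih =>
      intro u hu
      refine H u fun w hw => ih w ?_
      have h1 : w.val < u.val := hw
      omega
  exact fun u => key (n+1) u u.isLt

/-- total flow into `u` from below along negative edges -/
noncomputable def Dsum (f : EdgeC n → ℝ) (u : Fin (n+1)) : ℝ :=
  ∑ t, if htu : t < u then f (neg t u htu) else 0

lemma Dsum_pathFlow (A : Finset (Fin (n+1))) (h0 : 0 ∈ A) {u : Fin (n+1)} (hu : u ≠ 0) :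
    Dsum (pathFlow A) u = if u ∈ A then 1 else 0 := by
  unfold Dsum
  have hterm : ∀ t, (if htu : t < u then pathFlow A (neg t u htu) else 0) =
      if consec A t u then 1 else 0 := by
    intro t
    by_cases htu : t < u
    · rw [dif_pos htu, pathFlow_neg]
    · rw [dif_neg htu, if_neg (fun hc : consec A t u => htu hc.2.2.1)]
  rw [Finset.sum_congr rfl fun t _ => hterm t]
  by_cases hu' : u ∈ A
  · rw [if_pos hu']
    obtain ⟨t, ht⟩ := exists_pred hu' h0 hu
    refine (Finset.sum_eq_single_of_mem t (Finset.mem_univ _) ?_).trans (if_pos ht)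
    intro t' _ hne
    exact if_neg (fun hc => hne (consec_pred_unique hc ht))
  · rw [if_neg hu']
    exact Finset.sum_eq_zero fun t _ => if_neg (fun hc => hu' hc.2.1)

lemma Dsum_srcFlow (A B : Finset (Fin (n+1))) (u : Fin (n+1)) : Dsum (srcFlow A B) u = 0 := by
  unfold Dsum
  refine Finset.sum_eq_zero fun t _ => ?_
  by_cases htu : t < u
  · rw [dif_pos htu]
    unfold srcFlow
    rw [if_neg (fun hc => srcE_ne_neg A B t u htu hc.symm)]
  · rw [dif_neg htu]

lemma Dsum_vflow (A B : Finset (Fin (n+1))) (h0A : 0 ∈ A) (h0B : 0 ∈ B) {u : Fin (n+1)}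
    (hu : u ≠ 0) :
    Dsum (vflow A B) u = (if u ∈ A then (1:ℝ) else 0) + (if u ∈ B then 1 else 0) := by
  have hsplit : Dsum (vflow A B) u =
      Dsum (pathFlow A) u + Dsum (pathFlow B) u + Dsum (srcFlow A B) u := by
    unfold Dsum
    rw [← Finset.sum_add_distrib, ← Finset.sum_add_distrib]
    refine Finset.sum_congr rfl fun t _ => ?_
    by_cases htu : t < u
    · rw [dif_pos htu, dif_pos htu, dif_pos htu, dif_pos htu]
      rfl
    · rw [dif_neg htu, dif_neg htu, dif_neg htu, dif_neg htu]
      ring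
  rw [hsplit, Dsum_pathFlow A h0A hu, Dsum_pathFlow B h0B hu, Dsum_srcFlow, add_zero]

lemma ind_eq {P Q R S : Prop} [Decidable P] [Decidable Q] [Decidable R] [Decidable S]
    (hsum : (if P then (1:ℝ) else 0) + (if Q then 1 else 0) =
      (if R then (1:ℝ) else 0) + (if S then 1 else 0)) :
    ((P ∧ Q) ↔ (R ∧ S)) ∧ ((P ∨ Q) ↔ (R ∨ S)) := by
  by_cases hP : P <;> by_cases hQ : Q <;> by_cases hR : R <;> by_cases hS : S <;>
    simp only [hP, hQ, hR, hS, if_true, if_false] at hsum ⊢ <;>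
    first
      | (exfalso; norm_num at hsum; done)
      | (exact ⟨by tauto, by tauto⟩)

variable {h : Fin n → Fin 3}

lemma Bset_of_empty (htw : ¬ (twoSet h).Nonempty) : Bset h = oneSet h := by
  unfold Bset; rw [dif_neg htw]

lemma mem_Bset_of_twoSet {u : Fin (n+1)} (hu : u ∈ twoSet h) :
    u ∈ Bset h ∧ u ∉ oneSet h :=
  Finset.mem_sdiff.1 (by rw [Bset_diff_oneSet]; exact hu)

lemma twoSet_ne_zero {u : Fin (n+1)} (hu : u ∈ twoSet h) : u ≠ 0 :=
  fun hc => zero_not_mem_twoSet (hc ▸ hu)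

lemma lt_of_mem_oneSet_not_Bset (htw : (twoSet h).Nonempty) {u : Fin (n+1)}
    (hA : u ∈ oneSet h) (hB : u ∉ Bset h) : (twoSet h).min' htw < u := by
  have hnlt : ¬ u < (twoSet h).min' htw := by
    intro hlt
    apply hB
    unfold Bset
    rw [dif_pos htw]
    exact Finset.mem_insert_of_mem (Finset.mem_union_left _ (Finset.mem_filter.2 ⟨hA, hlt⟩))
  have hne : u ≠ (twoSet h).min' htw :=
    fun hc => oneSet_twoSet_disjoint hA (hc ▸ (twoSet h).min'_mem htw)
  exact lt_of_le_of_ne (not_lt.1 hnlt) (Ne.symm hne)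

lemma dec_inj : Function.Injective (dec : (Fin n → Fin 3) → EdgeC n → ℝ) := by
  intro h₁ h₂ heq
  have fin3iff : ∀ a b : Fin 3, (a = 1 ↔ b = 1) → (a = 2 ↔ b = 2) → a = b := by decide
  have hDs : ∀ u : Fin (n+1), u ≠ 0 →
      ((u ∈ oneSet h₁ ∧ u ∈ Bset h₁) ↔ (u ∈ oneSet h₂ ∧ u ∈ Bset h₂)) ∧
      ((u ∈ oneSet h₁ ∨ u ∈ Bset h₁) ↔ (u ∈ oneSet h₂ ∨ u ∈ Bset h₂)) := by
    intro u hu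
    refine ind_eq ?_
    rw [← Dsum_vflow _ _ zero_mem_oneSet zero_mem_Bset hu,
      ← Dsum_vflow _ _ zero_mem_oneSet zero_mem_Bset hu]
    rw [show vflow (oneSet h₁) (Bset h₁) = dec h₁ from rfl,
      show vflow (oneSet h₂) (Bset h₂) = dec h₂ from rfl, heq]
  by_cases htw₁ : (twoSet h₁).Nonempty
  · by_cases htw₂ : (twoSet h₂).Nonempty
    · -- main case: both words contain a 2
      set s₁ := (twoSet h₁).min' htw₁ with hs₁def
      set s₂ := (twoSet h₂).min' htw₂ with hs₂def
      have hs₁mem := (twoSet h₁).min'_mem htw₁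
      have hs₂mem := (twoSet h₂).min'_mem htw₂
      have hs₁B := mem_Bset_of_twoSet hs₁mem
      have hs₂B := mem_Bset_of_twoSet hs₂mem
      have hs₁0 : s₁ ≠ 0 := twoSet_ne_zero hs₁mem
      have hs₂0 : s₂ ≠ 0 := twoSet_ne_zero hs₂mem
      have hs21 : s₂ ≤ s₁ := by
        have hun : s₁ ∈ oneSet h₂ ∨ s₁ ∈ Bset h₂ :=
          (hDs s₁ hs₁0).2.1 (Or.inr hs₁B.1)
        have hni : ¬ (s₁ ∈ oneSet h₂ ∧ s₁ ∈ Bset h₂) :=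
          fun hc => hs₁B.2 ((hDs s₁ hs₁0).1.2 hc).1
        rcases hun with hA2 | hB2
        · have hnB2 : s₁ ∉ Bset h₂ := fun hc => hni ⟨hA2, hc⟩
          exact (lt_of_mem_oneSet_not_Bset htw₂ hA2 hnB2).le
        · have hnA2 : s₁ ∉ oneSet h₂ := fun hc => hni ⟨hc, hB2⟩
          have : s₁ ∈ twoSet h₂ := by
            rw [← Bset_diff_oneSet]
            exact Finset.mem_sdiff.2 ⟨hB2, hnA2⟩
          exact Finset.min'_le _ _ this
      have hs12 : s₁ ≤ s₂ := by
        have hun : s₂ ∈ oneSet h₁ ∨ s₂ ∈ Bset h₁ :=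
          (hDs s₂ hs₂0).2.2 (Or.inr hs₂B.1)
        have hni : ¬ (s₂ ∈ oneSet h₁ ∧ s₂ ∈ Bset h₁) :=
          fun hc => hs₂B.2 ((hDs s₂ hs₂0).1.1 hc).1
        rcases hun with hA1 | hB1
        · have hnB1 : s₂ ∉ Bset h₁ := fun hc => hni ⟨hA1, hc⟩
          exact (lt_of_mem_oneSet_not_Bset htw₁ hA1 hnB1).le
        · have hnA1 : s₂ ∉ oneSet h₁ := fun hc => hni ⟨hc, hB1⟩
          have : s₂ ∈ twoSet h₁ := by
            rw [← Bset_diff_oneSet]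
            exact Finset.mem_sdiff.2 ⟨hB1, hnA1⟩
          exact Finset.min'_le _ _ this
      have hseq : s₁ = s₂ := le_antisymm hs12 hs21
      have main : ∀ u : Fin (n+1), u ∈ oneSet h₁ ↔ u ∈ oneSet h₂ := by
        refine up_induction (fun u IH => ?_)
        by_cases hu0 : u = 0
        · subst hu0
          exact ⟨fun _ => zero_mem_oneSet, fun _ => zero_mem_oneSet⟩
        constructor
        · intro huA₁
          by_contra huA₂
          have hInter₁ : ¬ (u ∈ oneSet h₁ ∧ u ∈ Bset h₁) :=
            fun hc => huA₂ ((hDs u hu0).1.1 hc).1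
          have huB₁ : u ∉ Bset h₁ := fun hc => hInter₁ ⟨huA₁, hc⟩
          have hs₁u : s₁ < u := lt_of_mem_oneSet_not_Bset htw₁ huA₁ huB₁
          obtain ⟨t, ht⟩ := exists_pred huA₁ zero_mem_oneSet hu0
          have htu : t < u := ht.2.2.1
          have h1pos : vflow (oneSet h₁) (Bset h₁) (neg t u htu) ≠ 0 := by
            rw [vflow_neg_val, if_pos ht]
            have hnn : (0:ℝ) ≤ if consec (Bset h₁) t u then 1 else 0 := by
              split_ifs <;> norm_num
            linarith
          have hfval : vflow (oneSet h₂) (Bset h₂) (neg t u htu) =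
              vflow (oneSet h₁) (Bset h₁) (neg t u htu) := congrFun heq.symm _
          have hcons₂ : consec (oneSet h₂) t u ∨ consec (Bset h₂) t u := by
            by_contra hc
            push_neg at hc
            apply h1pos
            rw [← hfval, vflow_neg_val, if_neg hc.1, if_neg hc.2]
            ring
          have hconsB₂ : consec (Bset h₂) t u := by
            rcases hcons₂ with hc | hc
            · exact absurd hc.2.1 huA₂
            · exact hc
          have hsB₂' : s₁ ∈ Bset h₂ := by rw [hseq]; exact hs₂B.1
          have hst : s₁ ≤ t := consec_le_pred hconsB₂ hsB₂' hs₁u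
          have ht0 : t ≠ 0 :=
            fun hc => hs₁0 (le_antisymm (hc ▸ hst) (Fin.zero_le s₁))
          have htA₂ : t ∈ oneSet h₂ := (IH t htu).1 ht.1
          have hchar := (mem_inter_oneSet_Bset htw₂).1
            (Finset.mem_inter.2 ⟨htA₂, hconsB₂.1⟩)
          rcases hchar.2 with h0 | hlt
          · exact ht0 h0
          · rw [← hs₂def, ← hseq] at hlt
            exact absurd hlt (not_lt.2 hst)
        · intro huA₂
          by_contra huA₁
          have hInter₂ : ¬ (u ∈ oneSet h₂ ∧ u ∈ Bset h₂) :=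
            fun hc => huA₁ ((hDs u hu0).1.2 hc).1
          have huB₂ : u ∉ Bset h₂ := fun hc => hInter₂ ⟨huA₂, hc⟩
          have hs₂u : s₂ < u := lt_of_mem_oneSet_not_Bset htw₂ huA₂ huB₂
          obtain ⟨t, ht⟩ := exists_pred huA₂ zero_mem_oneSet hu0
          have htu : t < u := ht.2.2.1
          have h2pos : vflow (oneSet h₂) (Bset h₂) (neg t u htu) ≠ 0 := by
            rw [vflow_neg_val, if_pos ht]
            have hnn : (0:ℝ) ≤ if consec (Bset h₂) t u then 1 else 0 := by
              split_ifs <;> norm_num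
            linarith
          have hfval : vflow (oneSet h₁) (Bset h₁) (neg t u htu) =
              vflow (oneSet h₂) (Bset h₂) (neg t u htu) := congrFun heq _
          have hcons₁ : consec (oneSet h₁) t u ∨ consec (Bset h₁) t u := by
            by_contra hc
            push_neg at hc
            apply h2pos
            rw [← hfval, vflow_neg_val, if_neg hc.1, if_neg hc.2]
            ring
          have hconsB₁ : consec (Bset h₁) t u := by
            rcases hcons₁ with hc | hc
            · exact absurd hc.2.1 huA₁
            · exact hc
          have hsB₁' : s₂ ∈ Bset h₁ := by rw [← hseq]; exact hs₁B.1
          have hst : s₂ ≤ t := consec_le_pred hconsB₁ hsB₁' hs₂u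
          have ht0 : t ≠ 0 :=
            fun hc => hs₂0 (le_antisymm (hc ▸ hst) (Fin.zero_le s₂))
          have htA₁ : t ∈ oneSet h₁ := (IH t htu).2 ht.1
          have hchar := (mem_inter_oneSet_Bset htw₁).1
            (Finset.mem_inter.2 ⟨htA₁, hconsB₁.1⟩)
          rcases hchar.2 with h0 | hlt
          · exact ht0 h0
          · rw [← hs₁def, hseq] at hlt
            exact absurd hlt (not_lt.2 hst)
      funext v
      have hA := main v.succ
      have hTwoEq : v.succ ∈ twoSet h₁ ↔ v.succ ∈ twoSet h₂ := by
        rw [← Bset_diff_oneSet (h := h₁), ← Bset_diff_oneSet (h := h₂), Finset.mem_sdiff,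
          Finset.mem_sdiff]
        have hsne : (Fin.succ v : Fin (n+1)) ≠ 0 := Fin.succ_ne_zero v
        constructor
        · rintro ⟨hB, hA'⟩
          have hun : v.succ ∈ oneSet h₂ ∨ v.succ ∈ Bset h₂ :=
            (hDs v.succ hsne).2.1 (Or.inr hB)
          have hA2 : v.succ ∉ oneSet h₂ := fun hc => hA' (hA.2 hc)
          rcases hun with hc | hc
          · exact absurd hc hA2
          · exact ⟨hc, hA2⟩
        · rintro ⟨hB, hA'⟩
          have hun : v.succ ∈ oneSet h₁ ∨ v.succ ∈ Bset h₁ :=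
            (hDs v.succ hsne).2.2 (Or.inr hB)
          have hA1 : v.succ ∉ oneSet h₁ := fun hc => hA' (hA.1 hc)
          rcases hun with hc | hc
          · exact absurd hc hA1
          · exact ⟨hc, hA1⟩
      refine fin3iff _ _ ?_ ?_
      · rw [← mem_oneSet, ← mem_oneSet]; exact hA
      · rw [← mem_twoSet, ← mem_twoSet]; exact hTwoEq
    · -- h₁ has a 2 but h₂ does not: contradiction
      exfalso
      have hs₁mem := (twoSet h₁).min'_mem htw₁
      have hs₁B := mem_Bset_of_twoSet hs₁mem
      have hs₁0 := twoSet_ne_zero hs₁mem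
      have hB2A2 := Bset_of_empty htw₂
      have hun : (twoSet h₁).min' htw₁ ∈ oneSet h₂ ∨ (twoSet h₁).min' htw₁ ∈ Bset h₂ :=
        (hDs _ hs₁0).2.1 (Or.inr hs₁B.1)
      have hin2 : (twoSet h₁).min' htw₁ ∈ oneSet h₂ ∧ (twoSet h₁).min' htw₁ ∈ Bset h₂ := by
        rcases hun with hc | hc
        · exact ⟨hc, by rw [hB2A2]; exact hc⟩
        · exact ⟨by rw [← hB2A2]; exact hc, hc⟩
      exact hs₁B.2 ((hDs _ hs₁0).1.2 hin2).1
  · by_cases htw₂ : (twoSet h₂).Nonempty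
    · -- h₂ has a 2 but h₁ does not: contradiction
      exfalso
      have hs₂mem := (twoSet h₂).min'_mem htw₂
      have hs₂B := mem_Bset_of_twoSet hs₂mem
      have hs₂0 := twoSet_ne_zero hs₂mem
      have hB1A1 := Bset_of_empty htw₁
      have hun : (twoSet h₂).min' htw₂ ∈ oneSet h₁ ∨ (twoSet h₂).min' htw₂ ∈ Bset h₁ :=
        (hDs _ hs₂0).2.2 (Or.inr hs₂B.1)
      have hin1 : (twoSet h₂).min' htw₂ ∈ oneSet h₁ ∧ (twoSet h₂).min' htw₂ ∈ Bset h₁ := by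
        rcases hun with hc | hc
        · exact ⟨hc, by rw [hB1A1]; exact hc⟩
        · exact ⟨by rw [← hB1A1]; exact hc, hc⟩
      exact hs₂B.2 ((hDs _ hs₂0).1.1 hin1).1
    · -- neither word contains a 2
      have main : ∀ u : Fin (n+1), u ∈ oneSet h₁ ↔ u ∈ oneSet h₂ := by
        intro u
        by_cases hu0 : u = 0
        · subst hu0
          exact ⟨fun _ => zero_mem_oneSet, fun _ => zero_mem_oneSet⟩
        · have h1 := (hDs u hu0).2
          rw [Bset_of_empty htw₁, Bset_of_empty htw₂, or_self, or_self] at h1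
          exact h1
      funext v
      refine fin3iff _ _ ?_ ?_
      · rw [← mem_oneSet, ← mem_oneSet]; exact main v.succ
      · constructor
        · intro hc
          exact absurd (mem_twoSet.2 hc) (fun hm => htw₁ ⟨_, hm⟩)
        · intro hc
          exact absurd (mem_twoSet.2 hc) (fun hm => htw₂ ⟨_, hm⟩)

end Injectivity

lemma extremePoints_eq :
    (CRYC n).extremePoints ℝ = Set.range (dec : (Fin n → Fin 3) → (EdgeC n → ℝ)) := by
  ext x
  constructor
  · intro hx
    obtain ⟨A, B, hval, rfl⟩ := extreme_eq_vflow hx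
    obtain ⟨h, hh⟩ := encode hval
    exact ⟨h, hh⟩
  · rintro ⟨h, rfl⟩
    exact vflow_extreme (valid_dec h)

end CRYCproof

/-- `CRYC_{n+1}` has exactly `3^n` vertices. -/
theorem stmt7 (n : ℕ) (hn : 1 ≤ n) :
    ((CRYC n).extremePoints ℝ).ncard = 3 ^ n := by
  rw [CRYCproof.extremePoints_eq, ← Set.image_univ,
    Set.ncard_image_of_injective _ CRYCproof.dec_inj, Set.ncard_univ,
    Nat.card_eq_fintype_card]
  rw [Fintype.card_fun, Fintype.card_fin, Fintype.card_fin]
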